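/- arXiv:0803.2131 — 5 statements merged into one kernel-verified Lean document; each statement's English description precedes it below -/
import Mathlib

section
/- Let σ₀ = {0} ∪ {(-1)^k/k : k = 1, 2, 3, ...}, a compact subset of ℝ, and let X = C(σ₀, ℂ) with the supremum norm. There do not exist a constant C' > 0 and a map Ψ assigning to each function f : ℝ → ℂ a bounded linear operator Ψ(f) on X such that: (i) Ψ(f+g) = Ψ(f) + Ψ(g) and Ψ(f·g) = Ψ(f)∘Ψ(g) whenever f and g are of bounded variation on σ₀; (ii) ‖Ψ(f)‖ ≤ C'·(sup_{t∈σ₀}|f(t)| + var_{σ₀}(f)) whenever f is of bounded variation on σ₀; and (iii) Ψ(f)x = (t ↦ f(t)x(t)) for every Lipschitz function f : ℝ → ℂ and every x ∈ X. -/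
open MeasureTheory Filter Topology

/-- The set `σ₀ = {0} ∪ {(-1)^k/k : k ≥ 1}`. -/
noncomputable def sigma0 : Set ℝ := {0} ∪ {t : ℝ | ∃ k : ℕ, 1 ≤ k ∧ t = (-1) ^ k / k}

lemma sigma0_eq : sigma0 = insert (0 : ℝ) (Set.range fun k : ℕ => ((-1 : ℝ)) ^ (k + 1) / (k + 1)) := by
  ext t
  simp only [sigma0, Set.mem_union, Set.mem_singleton_iff, Set.mem_setOf_eq, Set.mem_insert_iff,
    Set.mem_range]
  constructor
  · rintro (h | ⟨k, hk, rfl⟩)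
    · exact Or.inl h
    · right
      refine ⟨k - 1, ?_⟩
      have hk' : k - 1 + 1 = k := Nat.succ_pred_eq_of_pos hk
      rw [hk']
      congr 1
      exact_mod_cast congrArg (Nat.cast : ℕ → ℝ) hk'
  · rintro (h | ⟨k, rfl⟩)
    · exact Or.inl h
    · right
      exact ⟨k + 1, Nat.le_add_left 1 k, by push_cast; ring⟩

lemma sigma0_isCompact : IsCompact sigma0 := by
  rw [sigma0_eq]
  have h : Tendsto (fun k : ℕ => ((-1 : ℝ)) ^ (k + 1) / (k + 1)) atTop (𝓝 0) := by
    apply squeeze_zero_norm (a := fun k : ℕ => 1 / ((k : ℝ) + 1))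
    · intro k
      rw [norm_div, norm_pow, norm_neg, norm_one, one_pow]
      simp [Real.norm_eq_abs, abs_of_nonneg (by positivity : (0:ℝ) ≤ (k:ℝ) + 1)]
    · exact tendsto_one_div_add_atTop_nhds_zero_nat
  exact h.isCompact_insert_range

instance : CompactSpace ↥sigma0 := isCompact_iff_compactSpace.mp sigma0_isCompact

/-- The `BV(σ)` norm-type quantity `sup_{t ∈ σ} |f(t)| + var_σ(f)`. -/
noncomputable def bvNorm (σ : Set ℝ) (f : ℝ → ℂ) : ℝ :=
  sSup ((fun t => ‖f t‖) '' σ) + (eVariationOn f σ).toReal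

lemma mem_sigma0_zero : (0 : ℝ) ∈ sigma0 := Or.inl rfl

lemma sigma0_subset_Icc : sigma0 ⊆ Set.Icc (-1 : ℝ) (1/2) := by
  rintro t (rfl | ⟨k, hk, rfl⟩)
  · norm_num
  · have hk' : (1 : ℝ) ≤ k := by exact_mod_cast hk
    have hpos : (0:ℝ) < k := by linarith
    rcases Nat.even_or_odd k with he | ho
    · rw [he.neg_one_pow]
      have hk2 : (2 : ℝ) ≤ k := by
        obtain ⟨m, rfl⟩ := he
        have h1 : 1 ≤ m := by omega
        have h2 : (1:ℝ) ≤ m := by exact_mod_cast h1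
        push_cast; linarith
      constructor
      · have : (0:ℝ) ≤ 1 / k := by positivity
        linarith
      · rw [div_le_div_iff₀ hpos (by norm_num)]
        linarith
    · rw [ho.neg_one_pow]
      have h1 : 1/(k:ℝ) ≤ 1 := by rw [div_le_one hpos]; linarith
      have h0 : (0:ℝ) ≤ 1 / k := by positivity
      constructor
      · rw [neg_div]; linarith
      · rw [neg_div]; linarith

lemma sigma0_bv_of_monotoneOn {h : ℝ → ℝ} (hm : MonotoneOn h sigma0) :
    BoundedVariationOn h sigma0 := by
  have hm1 : (-1:ℝ) ∈ sigma0 := Or.inr ⟨1, le_rfl, by norm_num⟩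
  have hhalf : (1/2:ℝ) ∈ sigma0 := Or.inr ⟨2, by norm_num, by norm_num⟩
  have hb := hm.eVariationOn_le hm1 hhalf
  rw [Set.inter_eq_self_of_subset_left sigma0_subset_Icc] at hb
  exact (lt_of_le_of_lt hb ENNReal.ofReal_lt_top).ne

lemma sigma0_bv_id : BoundedVariationOn (fun t : ℝ => t) sigma0 :=
  sigma0_bv_of_monotoneOn (fun _ _ _ _ hab => hab)

lemma sigma0_bv_of_lipschitz {χ : ℝ → ℂ} {K : NNReal} (hχ : LipschitzWith K χ) :
    BoundedVariationOn χ sigma0 :=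
  hχ.comp_boundedVariationOn sigma0_bv_id

lemma bump_lipschitz (s δ : ℝ) (hδ : 0 < δ) :
    LipschitzWith ⟨δ⁻¹, by positivity⟩ (fun t => max 0 (1 - |t - s| / δ)) := by
  apply LipschitzWith.of_dist_le_mul
  intro a b
  simp only [Real.dist_eq]
  have h1 : |max (1 - |a - s| / δ) 0 - max (1 - |b - s| / δ) 0|
      ≤ |(1 - |a - s| / δ) - (1 - |b - s| / δ)| := abs_max_sub_max_le_abs _ _ _
  rw [max_comm (1 - |a - s| / δ) 0, max_comm (1 - |b - s| / δ) 0] at h1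
  have h2 : (1 - |a - s| / δ) - (1 - |b - s| / δ) = (|b - s| - |a - s|) / δ := by ring
  have h3 : |(|b - s| - |a - s|)| ≤ |b - a| := by
    have := abs_abs_sub_abs_le_abs_sub (b - s) (a - s)
    rwa [show b - s - (a - s) = b - a by ring] at this
  have h4 : |(|b - s| - |a - s|) / δ| = |(|b - s| - |a - s|)| / δ := by
    rw [abs_div, abs_of_pos hδ]
  calc |max 0 (1 - |a - s| / δ) - max 0 (1 - |b - s| / δ)|
      ≤ |(|b - s| - |a - s|)| / δ := by rw [← h4, ← h2]; exact h1
    _ ≤ |b - a| / δ := div_le_div_of_nonneg_right h3 hδ.le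
    _ = (⟨δ⁻¹, by positivity⟩ : NNReal) * |a - b| := by
        rw [abs_sub_comm b a]; push_cast; rw [div_eq_inv_mul]

/-- On `X = C(σ₀, ℂ)` there is no `BV(σ₀)` functional calculus `Ψ`
(additive and multiplicative on functions of bounded variation on `σ₀`, bounded by
`C'·(sup_{σ₀}|f| + var_{σ₀} f)`) which agrees with multiplication by `f` for every
Lipschitz function `f : ℝ → ℂ`. -/
theorem stmt2 :
    ¬ ∃ (C' : ℝ) (_ : 0 < C') (Ψ : (ℝ → ℂ) → C(↥sigma0, ℂ) →L[ℂ] C(↥sigma0, ℂ)),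
      (∀ f g : ℝ → ℂ, BoundedVariationOn f sigma0 → BoundedVariationOn g sigma0 →
        Ψ (f + g) = Ψ f + Ψ g ∧ Ψ (f * g) = (Ψ f).comp (Ψ g)) ∧
      (∀ f : ℝ → ℂ, BoundedVariationOn f sigma0 → ‖Ψ f‖ ≤ C' * bvNorm sigma0 f) ∧
      (∀ f : ℝ → ℂ, (∃ K : NNReal, LipschitzWith K f) →
        ∀ x : C(↥sigma0, ℂ), ∀ t : ↥sigma0, (Ψ f x) t = f t * x t) := by
  rintro ⟨C', hC', Ψ, hmul, hbd, hlip⟩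
  set g : ℝ → ℝ := Set.indicator (Set.Ioi (0:ℝ)) (fun _ => (1:ℝ)) with hg
  have hg_mono : Monotone g := by
    intro a b hab
    by_cases ha : a ∈ Set.Ioi (0:ℝ)
    · have hb : b ∈ Set.Ioi (0:ℝ) := lt_of_lt_of_le ha hab
      rw [hg, Set.indicator_of_mem ha, Set.indicator_of_mem hb]
    · rw [hg, Set.indicator_of_notMem ha]
      exact Set.indicator_nonneg (fun _ _ => zero_le_one) b
  set f : ℝ → ℂ := fun t => ((g t : ℝ) : ℂ) with hf
  have hfBV : BoundedVariationOn f sigma0 :=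
    Complex.isometry_ofReal.lipschitz.comp_boundedVariationOn
      (sigma0_bv_of_monotoneOn (hg_mono.monotoneOn _))
  have hgpos : ∀ t : ℝ, 0 < t → g t = 1 := fun t ht => Set.indicator_of_mem ht _
  have hgneg : ∀ t : ℝ, t ≤ 0 → g t = 0 := fun t ht =>
    Set.indicator_of_notMem (by simpa using ht) _
  set y : C(↥sigma0, ℂ) := Ψ f 1 with hy
  have key : ∀ (s : ℝ) (hs : s ∈ sigma0), s ≠ 0 → y ⟨s, hs⟩ = f s := by
    intro s hs hs0
    have hδ : 0 < |s| := abs_pos.mpr hs0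
    set χr : ℝ → ℝ := fun t => max 0 (1 - |t - s| / |s|) with hχr
    have hχr_lip := bump_lipschitz s |s| hδ
    set χ : ℝ → ℂ := fun t => ((χr t : ℝ) : ℂ) with hχ
    have hχ_lip : LipschitzWith (1 * ⟨|s|⁻¹, by positivity⟩) χ :=
      Complex.isometry_ofReal.lipschitz.comp hχr_lip
    have hχBV : BoundedVariationOn χ sigma0 := sigma0_bv_of_lipschitz hχ_lip
    have hχs : χ s = 1 := by simp [hχ, hχr]
    have hprod : ∃ K : NNReal, LipschitzWith K (χ * f) := by
      rcases hs0.lt_or_gt with hneg | hpos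
      · have hzero : χ * f = 0 := by
          funext t
          rcases le_or_gt t 0 with ht | ht
          · simp [hf, hgneg t ht]
          · have hz : χr t = 0 := by
              have h1 : |s| ≤ |t - s| := by
                rw [abs_of_neg hneg, abs_of_pos (by linarith : 0 < t - s)]; linarith
              have h2 : 1 - |t - s| / |s| ≤ 0 := by
                rw [sub_nonpos, le_div_iff₀ hδ, one_mul]; exact h1
              simp [hχr, max_eq_left h2]
            simp [hχ, hz]
        rw [hzero]
        exact ⟨0, LipschitzWith.const' 0⟩
      · have hid : χ * f = χ := by
          funext t
          rcases le_or_gt t 0 with ht | ht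
          · have hz : χr t = 0 := by
              have h1 : |s| ≤ |t - s| := by
                rw [abs_of_pos hpos, abs_of_neg (by linarith : t - s < 0)]; linarith
              have h2 : 1 - |t - s| / |s| ≤ 0 := by
                rw [sub_nonpos, le_div_iff₀ hδ, one_mul]; exact h1
              simp [hχr, max_eq_left h2]
            simp [hχ, hz]
          · simp [hf, hgpos t ht]
        rw [hid]
        exact ⟨_, hχ_lip⟩
    have hm := (hmul χ f hχBV hfBV).2
    have e1 := hlip (χ * f) hprod 1 ⟨s, hs⟩
    have e2 := hlip χ ⟨_, hχ_lip⟩ (Ψ f 1) ⟨s, hs⟩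
    rw [hm] at e1
    simp only [ContinuousLinearMap.comp_apply] at e1
    rw [e2] at e1
    simp only [Pi.mul_apply, hχs, one_mul, ContinuousMap.one_apply, mul_one] at e1
    exact e1
  have memp : ∀ k : ℕ, ((2*(k:ℝ)+2)⁻¹) ∈ sigma0 := by
    intro k
    refine Or.inr ⟨2*k+2, by omega, ?_⟩
    rw [Even.neg_one_pow ⟨k+1, by ring⟩]
    push_cast; rw [one_div]
  have memn : ∀ k : ℕ, (-(2*(k:ℝ)+1)⁻¹) ∈ sigma0 := by
    intro k
    refine Or.inr ⟨2*k+1, by omega, ?_⟩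
    rw [Odd.neg_one_pow ⟨k, by ring⟩]
    push_cast; rw [neg_div, one_div]
  have hppos : ∀ k : ℕ, (0:ℝ) < (2*(k:ℝ)+2)⁻¹ := by intro k; positivity
  have hnneg : ∀ k : ℕ, (-(2*(k:ℝ)+1)⁻¹ : ℝ) < 0 := by
    intro k; rw [neg_lt_zero]; positivity
  have hyp : ∀ k : ℕ, y ⟨_, memp k⟩ = 1 := by
    intro k
    rw [key _ (memp k) (hppos k).ne']
    have := hgpos _ (hppos k)
    simp [hf, this]
  have hyn : ∀ k : ℕ, y ⟨_, memn k⟩ = 0 := by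
    intro k
    rw [key _ (memn k) (hnneg k).ne]
    have := hgneg _ (hnneg k).le
    simp [hf, this]
  -- limits
  have hz1 : Tendsto (fun k : ℕ => ((2*(k:ℝ)+2)⁻¹ : ℝ)) atTop (𝓝 0) := by
    apply squeeze_zero (fun k => (hppos k).le) (fun k => ?_)
      tendsto_one_div_add_atTop_nhds_zero_nat
    rw [one_div]
    exact inv_anti₀ (by positivity) (by push_cast; linarith)
  have hz2 : Tendsto (fun k : ℕ => (-(2*(k:ℝ)+1)⁻¹ : ℝ)) atTop (𝓝 0) := by
    rw [show (0:ℝ) = -0 by norm_num]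
    apply Tendsto.neg
    apply squeeze_zero (fun k => by positivity) (fun k => ?_)
      tendsto_one_div_add_atTop_nhds_zero_nat
    rw [one_div]
    exact inv_anti₀ (by positivity) (by push_cast; linarith)
  set z0 : ↥sigma0 := ⟨0, mem_sigma0_zero⟩ with hz0
  have hc1 : Tendsto (fun k : ℕ => y ⟨_, memp k⟩) atTop (𝓝 (y z0)) :=
    (y.continuous.tendsto z0).comp (tendsto_subtype_rng.mpr (by simpa using hz1))
  have hc2 : Tendsto (fun k : ℕ => y ⟨_, memn k⟩) atTop (𝓝 (y z0)) :=
    (y.continuous.tendsto z0).comp (tendsto_subtype_rng.mpr (by simpa using hz2))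
  have h1 : y z0 = 1 := tendsto_nhds_unique (by simpa only [hyp] using hc1) tendsto_const_nhds
  have h0 : y z0 = 0 := tendsto_nhds_unique (by simpa only [hyn] using hc2) tendsto_const_nhds
  rw [h1] at h0
  exact one_ne_zero h0
end

section
/- Let (Ω, Σ, μ) be a measure space, let 1 ≤ r < s < ∞, and let K > 0. Suppose (T_p)_{p∈(r,s)} is a consistent family of bounded operators on the complex spaces L^p(μ) with ‖T_p‖ ≤ K for all p ∈ (r,s). Then there exists a unique bounded linear operator V on L^s(μ) such that V x = T_p x (μ-almost everywhere) for every p ∈ (r,s) and every x ∈ L^s(μ) ∩ L^p(μ); moreover ‖V‖ ≤ K. -/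
open MeasureTheory Filter Topology ENNReal NNReal Set

attribute [local instance] MeasureTheory.Lp.simpleFunc.smul
  MeasureTheory.Lp.simpleFunc.module MeasureTheory.Lp.simpleFunc.normedSpace
  MeasureTheory.Lp.simpleFunc.isBoundedSMul

private lemma aux_rpow_tendsto (t : ℝ≥0) {a : ℝ} (ha : 0 < a) {u : ℕ → ℝ}
    (hu : Tendsto u atTop (𝓝 a)) (hupos : ∀ n, 0 ≤ u n) :
    Tendsto (fun n => (t : ℝ≥0∞) ^ (u n)) atTop (𝓝 ((t : ℝ≥0∞) ^ a)) := by
  have h1 : Tendsto (fun n => (t ^ (u n) : ℝ≥0)) atTop (𝓝 (t ^ a)) := by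
    have := (NNReal.continuousAt_rpow (x := t) (y := a) (Or.inr ha)).tendsto
    exact this.comp (tendsto_const_nhds.prodMk_nhds hu)
  have h2 : Tendsto (fun n => ((t ^ (u n) : ℝ≥0) : ℝ≥0∞)) atTop (𝓝 ((t ^ a : ℝ≥0) : ℝ≥0∞)) :=
    ENNReal.tendsto_coe.2 h1
  rw [← ENNReal.coe_rpow_of_nonneg t ha.le]
  exact h2.congr fun n => (ENNReal.coe_rpow_of_nonneg t (hupos n))

private lemma aux_rpow_le (t : ℝ≥0) {a b c : ℝ} (hba : b ≤ a) (hac : a ≤ c) :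
    (t : ℝ≥0∞) ^ a ≤ (t : ℝ≥0∞) ^ b + (t : ℝ≥0∞) ^ c := by
  rcases le_total ((t : ℝ≥0∞)) 1 with h | h
  · exact le_add_of_le_of_nonneg (ENNReal.rpow_le_rpow_of_exponent_ge h hba) (zero_le)
  · exact le_add_of_nonneg_of_le (zero_le) (ENNReal.rpow_le_rpow_of_exponent_le h hac)

/-- Let `(Ω, Σ, μ)` be a measure space, `1 ≤ r < s < ∞` and `K > 0`.  If
`(T_p)_{p ∈ (r,s)}` is a consistent family of bounded operators on the complex spaces
`L^p(μ)` with `‖T_p‖ ≤ K` for all `p ∈ (r,s)`, then there is a unique bounded operator `V` on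
`L^s(μ)` such that `V x = T_p x` μ-a.e. for every `p ∈ (r,s)` and every
`x ∈ L^s(μ) ∩ L^p(μ)`; moreover `‖V‖ ≤ K`. -/
theorem stmt9 {Ω : Type*} [MeasurableSpace Ω] (μ : Measure Ω)
    (r s : ℝ≥0∞) (hr : 1 ≤ r) (hrs : r < s) (hs : s < ∞) (K : ℝ) (hK : 0 < K)
    (T : ∀ (p : ℝ≥0∞) [Fact (1 ≤ p)], r < p → p < s → Lp ℂ p μ →L[ℂ] Lp ℂ p μ)
    (hTK : ∀ (p : ℝ≥0∞) [Fact (1 ≤ p)] (hp : r < p) (hps : p < s), ‖T p hp hps‖ ≤ K)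
    (hcons : ∀ (p q : ℝ≥0∞) [Fact (1 ≤ p)] [Fact (1 ≤ q)]
        (hp : r < p) (hps : p < s) (hq : r < q) (hqs : q < s)
        (x : Lp ℂ p μ) (y : Lp ℂ q μ), (x : Ω → ℂ) =ᵐ[μ] (y : Ω → ℂ) →
        (T p hp hps x : Ω → ℂ) =ᵐ[μ] (T q hq hqs y : Ω → ℂ)) :
    haveI : Fact (1 ≤ s) := ⟨hr.trans hrs.le⟩
    ∃ V : Lp ℂ s μ →L[ℂ] Lp ℂ s μ,
      (∀ (p : ℝ≥0∞) [Fact (1 ≤ p)] (hp : r < p) (hps : p < s)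
        (x : Lp ℂ s μ) (y : Lp ℂ p μ), (x : Ω → ℂ) =ᵐ[μ] (y : Ω → ℂ) →
          (V x : Ω → ℂ) =ᵐ[μ] (T p hp hps y : Ω → ℂ)) ∧
      ‖V‖ ≤ K ∧
      ∀ V' : Lp ℂ s μ →L[ℂ] Lp ℂ s μ,
        (∀ (p : ℝ≥0∞) [Fact (1 ≤ p)] (hp : r < p) (hps : p < s)
          (x : Lp ℂ s μ) (y : Lp ℂ p μ), (x : Ω → ℂ) =ᵐ[μ] (y : Ω → ℂ) →
            (V' x : Ω → ℂ) =ᵐ[μ] (T p hp hps y : Ω → ℂ)) → V' = V := by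
  haveI hfs : Fact (1 ≤ s) := ⟨hr.trans hrs.le⟩
  have hs0 : s ≠ 0 := (zero_lt_one.trans_le hfs.out).ne'
  have hsne : s ≠ ∞ := hs.ne
  have hs' : 0 < s.toReal := ENNReal.toReal_pos hs0 hsne
  have hr0 : r ≠ 0 := (zero_lt_one.trans_le hr).ne'
  have hrne : r ≠ ∞ := (hrs.trans hs).ne
  obtain ⟨p₀, hrp₀, hp₀s⟩ := exists_between hrs
  haveI : Fact (1 ≤ p₀) := ⟨hr.trans hrp₀.le⟩
  have hp₀0 : p₀ ≠ 0 := (zero_lt_one.trans_le (hr.trans hrp₀.le)).ne'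
  have hp₀ne : p₀ ≠ ∞ := (hp₀s.trans hs).ne
  -- a sequence in (r,s) tending to s
  have hscl : s ∈ closure (Set.Ioo r s) := by
    rw [closure_Ioo hrs.ne]; exact ⟨hrs.le, le_rfl⟩
  obtain ⟨u, hu_mem, hu_tend⟩ := mem_closure_iff_seq_limit.1 hscl
  have hu1 : ∀ n, (1 : ℝ≥0∞) ≤ u n := fun n => hr.trans (hu_mem n).1.le
  have hu0 : ∀ n, u n ≠ 0 := fun n => (zero_lt_one.trans_le (hu1 n)).ne'
  have hune : ∀ n, u n ≠ ∞ := fun n => ((hu_mem n).2.trans hs).ne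
  have hu_toReal : Tendsto (fun n => (u n).toReal) atTop (𝓝 s.toReal) :=
    (ENNReal.tendsto_toReal hsne).comp hu_tend
  have hu_toReal_pos : ∀ n, 0 < (u n).toReal := fun n => ENNReal.toReal_pos (hu0 n) (hune n)
  have hur : ∀ n, r.toReal ≤ (u n).toReal := fun n =>
    (ENNReal.toReal_le_toReal hrne (hune n)).2 (hu_mem n).1.le
  have hus : ∀ n, (u n).toReal ≤ s.toReal := fun n =>
    (ENNReal.toReal_le_toReal (hune n) hsne).2 (hu_mem n).2.le
  -- simple functions in L^s are in all L^p
  have memf : ∀ (f : SimpleFunc Ω ℂ), MemLp f s μ → ∀ (p : ℝ≥0∞), p ≠ 0 → p ≠ ∞ → MemLp f p μ :=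
    fun f hf p h0 ht => (SimpleFunc.memLp_iff h0 ht).2 ((SimpleFunc.memLp_iff hs0 hsne).1 hf)
  -- norm bound for T in eLpNorm form
  have hTb : ∀ (p : ℝ≥0∞) [Fact (1 ≤ p)] (hp : r < p) (hps : p < s) (y : Lp ℂ p μ),
      eLpNorm (⇑(T p hp hps y)) p μ ≤ ENNReal.ofReal K * eLpNorm (⇑y) p μ := by
    intro p _ hp hps y
    have h1 : eLpNorm (⇑(T p hp hps y)) p μ = ENNReal.ofReal ‖T p hp hps y‖ := by
      rw [Lp.norm_def, ENNReal.ofReal_toReal (Lp.eLpNorm_ne_top _)]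
    have h2 : eLpNorm (⇑y) p μ = ENNReal.ofReal ‖y‖ := by
      rw [Lp.norm_def, ENNReal.ofReal_toReal (Lp.eLpNorm_ne_top _)]
    rw [h1, h2, ← ENNReal.ofReal_mul hK.le]
    exact ENNReal.ofReal_le_ofReal
      (((T p hp hps).le_opNorm y).trans (mul_le_mul_of_nonneg_right (hTK p hp hps) (norm_nonneg _)))
  -- the main estimate
  have main : ∀ (f : SimpleFunc Ω ℂ) (hf : MemLp f s μ),
      eLpNorm (⇑(T p₀ hrp₀ hp₀s ((memf f hf p₀ hp₀0 hp₀ne).toLp f))) s μ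
        ≤ ENNReal.ofReal K * eLpNorm (⇑f) s μ := by
    intro f hf
    set y₀ : Lp ℂ p₀ μ := (memf f hf p₀ hp₀0 hp₀ne).toLp f with hy₀
    set g : Ω → ℂ := ⇑(T p₀ hrp₀ hp₀s y₀) with hgdef
    have hg_meas : StronglyMeasurable g := Lp.stronglyMeasurable _
    have hgu : ∀ n, eLpNorm g (u n) μ ≤ ENNReal.ofReal K * eLpNorm (⇑f) (u n) μ := by
      intro n
      haveI : Fact (1 ≤ u n) := ⟨hu1 n⟩
      set yn : Lp ℂ (u n) μ := (memf f hf (u n) (hu0 n) (hune n)).toLp f with hyn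
      have hae : g =ᵐ[μ] ⇑(T (u n) (hu_mem n).1 (hu_mem n).2 yn) :=
        hcons p₀ (u n) hrp₀ hp₀s (hu_mem n).1 (hu_mem n).2 y₀ yn
          ((MemLp.coeFn_toLp _).trans (MemLp.coeFn_toLp _).symm)
      calc eLpNorm g (u n) μ = eLpNorm (⇑(T (u n) (hu_mem n).1 (hu_mem n).2 yn)) (u n) μ :=
            eLpNorm_congr_ae hae
        _ ≤ ENNReal.ofReal K * eLpNorm (⇑yn) (u n) μ := hTb _ _ _ _
        _ = ENNReal.ofReal K * eLpNorm (⇑f) (u n) μ := by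
            rw [eLpNorm_congr_ae (MemLp.coeFn_toLp _)]
    have hmeasf : ∀ c : ℝ, Measurable fun ω => (‖f ω‖₊ : ℝ≥0∞) ^ c := fun c =>
      (f.measurable.nnnorm.coe_nnreal_ennreal).pow_const c
    have hIf : Tendsto (fun n => ∫⁻ ω, (‖f ω‖₊ : ℝ≥0∞) ^ (u n).toReal ∂μ) atTop
        (𝓝 (∫⁻ ω, (‖f ω‖₊ : ℝ≥0∞) ^ s.toReal ∂μ)) := by
      refine tendsto_lintegral_of_dominated_convergence
        (fun ω => (‖f ω‖₊ : ℝ≥0∞) ^ r.toReal + (‖f ω‖₊ : ℝ≥0∞) ^ s.toReal)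
        (fun n => hmeasf _)
        (fun n => Eventually.of_forall fun ω => aux_rpow_le _ (hur n) (hus n)) ?_
        (Eventually.of_forall fun ω =>
          aux_rpow_tendsto _ hs' hu_toReal fun n => (hu_toReal_pos n).le)
      rw [lintegral_add_left (hmeasf _)]
      exact ENNReal.add_ne_top.2
        ⟨(lintegral_rpow_enorm_lt_top_of_eLpNorm_lt_top hr0 hrne
            (memf f hf r hr0 hrne).2).ne,
          (lintegral_rpow_enorm_lt_top_of_eLpNorm_lt_top hs0 hsne hf.2).ne⟩
    have hKfin : (ENNReal.ofReal K) ^ s.toReal ≠ ∞ :=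
      (ENNReal.rpow_lt_top_of_nonneg hs'.le ENNReal.ofReal_ne_top).ne
    have hK0 : (ENNReal.ofReal K) ^ s.toReal ≠ 0 :=
      (ENNReal.rpow_pos (ENNReal.ofReal_pos.2 hK) ENNReal.ofReal_ne_top).ne'
    have hFatou : (∫⁻ ω, (‖g ω‖₊ : ℝ≥0∞) ^ s.toReal ∂μ)
        ≤ (ENNReal.ofReal K) ^ s.toReal * ∫⁻ ω, (‖f ω‖₊ : ℝ≥0∞) ^ s.toReal ∂μ := by
      have hmeasg : ∀ c : ℝ, Measurable fun ω => (‖g ω‖₊ : ℝ≥0∞) ^ c := fun c =>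
        (hg_meas.measurable.nnnorm.coe_nnreal_ennreal).pow_const c
      have hpt : ∀ ω : Ω, (‖g ω‖₊ : ℝ≥0∞) ^ s.toReal
          = liminf (fun n => (‖g ω‖₊ : ℝ≥0∞) ^ (u n).toReal) atTop := fun ω =>
        (aux_rpow_tendsto _ hs' hu_toReal fun n => (hu_toReal_pos n).le).liminf_eq.symm
      calc ∫⁻ ω, (‖g ω‖₊ : ℝ≥0∞) ^ s.toReal ∂μ
          = ∫⁻ ω, liminf (fun n => (‖g ω‖₊ : ℝ≥0∞) ^ (u n).toReal) atTop ∂μ := by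
            exact lintegral_congr fun ω => hpt ω
        _ ≤ liminf (fun n => ∫⁻ ω, (‖g ω‖₊ : ℝ≥0∞) ^ (u n).toReal ∂μ) atTop :=
            lintegral_liminf_le fun n => hmeasg _
        _ ≤ liminf (fun n => (ENNReal.ofReal K) ^ (u n).toReal
              * ∫⁻ ω, (‖f ω‖₊ : ℝ≥0∞) ^ (u n).toReal ∂μ) atTop := by
            refine liminf_le_liminf (Eventually.of_forall fun n => ?_)
            have h1 : ∫⁻ ω, (‖g ω‖₊ : ℝ≥0∞) ^ (u n).toReal ∂μ
                = (eLpNorm g (u n) μ) ^ (u n).toReal := by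
              rw [eLpNorm_eq_lintegral_rpow_enorm_toReal (hu0 n) (hune n), ← ENNReal.rpow_mul,
                one_div_mul_cancel (hu_toReal_pos n).ne', ENNReal.rpow_one]
              simp only [enorm_eq_nnnorm]
            have h2 : (eLpNorm (⇑f) (u n) μ) ^ (u n).toReal
                = ∫⁻ ω, (‖f ω‖₊ : ℝ≥0∞) ^ (u n).toReal ∂μ := by
              rw [eLpNorm_eq_lintegral_rpow_enorm_toReal (hu0 n) (hune n), ← ENNReal.rpow_mul,
                one_div_mul_cancel (hu_toReal_pos n).ne', ENNReal.rpow_one]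
              simp only [enorm_eq_nnnorm]
            rw [h1, ← h2, ← ENNReal.mul_rpow_of_nonneg _ _ (hu_toReal_pos n).le]
            exact ENNReal.rpow_le_rpow (hgu n) (hu_toReal_pos n).le
        _ = (ENNReal.ofReal K) ^ s.toReal * ∫⁻ ω, (‖f ω‖₊ : ℝ≥0∞) ^ s.toReal ∂μ := by
            refine Tendsto.liminf_eq (ENNReal.Tendsto.mul ?_ (Or.inl hK0) hIf (Or.inr hKfin))
            have ht : Tendsto (fun n => ENNReal.ofReal (K ^ (u n).toReal)) atTop
                (𝓝 (ENNReal.ofReal (K ^ s.toReal))) :=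
              (ENNReal.continuous_ofReal.tendsto _).comp
                ((Real.continuousAt_const_rpow hK.ne').tendsto.comp hu_toReal)
            simp only [ENNReal.ofReal_rpow_of_pos hK]
            exact ht
    rw [eLpNorm_eq_lintegral_rpow_enorm_toReal hs0 hsne, eLpNorm_eq_lintegral_rpow_enorm_toReal hs0 hsne]
    calc (∫⁻ ω, (‖g ω‖₊ : ℝ≥0∞) ^ s.toReal ∂μ) ^ (1 / s.toReal)
        ≤ ((ENNReal.ofReal K) ^ s.toReal * ∫⁻ ω, (‖f ω‖₊ : ℝ≥0∞) ^ s.toReal ∂μ)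
            ^ (1 / s.toReal) := ENNReal.rpow_le_rpow hFatou (by positivity)
      _ = ENNReal.ofReal K * (∫⁻ ω, (‖f ω‖₊ : ℝ≥0∞) ^ s.toReal ∂μ) ^ (1 / s.toReal) := by
          rw [ENNReal.mul_rpow_of_nonneg _ _ (by positivity : (0:ℝ) ≤ 1 / s.toReal),
            ← ENNReal.rpow_mul, mul_one_div, div_self hs'.ne', ENNReal.rpow_one]
  -- membership of the image in L^s
  have mainmem : ∀ (f : SimpleFunc Ω ℂ) (hf : MemLp f s μ),
      MemLp (⇑(T p₀ hrp₀ hp₀s ((memf f hf p₀ hp₀0 hp₀ne).toLp f))) s μ := fun f hf =>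
    ⟨(Lp.stronglyMeasurable _).aestronglyMeasurable,
      (main f hf).trans_lt (ENNReal.mul_lt_top ENNReal.ofReal_lt_top hf.2)⟩
  -- the operator on simple functions
  set φ : Lp.simpleFunc ℂ s μ → (SimpleFunc Ω ℂ) := fun x => Lp.simpleFunc.toSimpleFunc x with hφ
  have hφmem : ∀ x, MemLp (φ x) s μ := fun x => Lp.simpleFunc.memLp x
  set Vsf : Lp.simpleFunc ℂ s μ → Lp ℂ s μ := fun x =>
    (mainmem (φ x) (hφmem x)).toLp _ with hVsf
  have hφae : ∀ x : Lp.simpleFunc ℂ s μ, ⇑(φ x) =ᵐ[μ] ⇑(x : Lp ℂ s μ) := fun x =>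
    Lp.simpleFunc.toSimpleFunc_eq_toFun x
  -- a.e. identification of Vsf with any T p y, y =ᵐ x
  have hVsf_ae : ∀ (x : Lp.simpleFunc ℂ s μ) (p : ℝ≥0∞) [Fact (1 ≤ p)]
      (hp : r < p) (hps : p < s) (y : Lp ℂ p μ), ⇑y =ᵐ[μ] ⇑(x : Lp ℂ s μ) →
      ⇑(Vsf x) =ᵐ[μ] ⇑(T p hp hps y) := by
    intro x p _ hp hps y hy
    refine (MemLp.coeFn_toLp _).trans ?_
    refine hcons p₀ p hrp₀ hp₀s hp hps _ y ?_
    exact (MemLp.coeFn_toLp _).trans ((hφae x).trans hy.symm)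
  -- the canonical y at exponent p₀ for each simple x
  set yp : ∀ x : Lp.simpleFunc ℂ s μ, Lp ℂ p₀ μ := fun x =>
    (memf (φ x) (hφmem x) p₀ hp₀0 hp₀ne).toLp (φ x) with hyp
  have hyp_ae : ∀ x, ⇑(yp x) =ᵐ[μ] ⇑(x : Lp ℂ s μ) := fun x =>
    (MemLp.coeFn_toLp _).trans (hφae x)
  -- additivity
  have hadd : ∀ x y : Lp.simpleFunc ℂ s μ, Vsf (x + y) = Vsf x + Vsf y := by
    intro x y
    apply Lp.ext
    have hsum : yp (x + y) = yp x + yp y := by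
      apply Lp.ext
      filter_upwards [hyp_ae (x + y), hyp_ae x, hyp_ae y, Lp.coeFn_add (yp x) (yp y),
        Lp.coeFn_add ((x : Lp ℂ s μ)) ((y : Lp ℂ s μ))] with ω h1 h2 h3 h4 h5
      rw [h1, h4]
      show (((x + y : Lp.simpleFunc ℂ s μ) : Lp ℂ s μ) : Ω → ℂ) ω = _
      rw [AddSubgroup.coe_add, h5]
      simp only [Pi.add_apply]
      rw [h2, h3]
    have e1 : ⇑(Vsf (x + y)) =ᵐ[μ] ⇑(T p₀ hrp₀ hp₀s (yp (x + y))) :=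
      hVsf_ae (x + y) p₀ hrp₀ hp₀s _ (hyp_ae _)
    have e2 : ⇑(Vsf x) =ᵐ[μ] ⇑(T p₀ hrp₀ hp₀s (yp x)) := hVsf_ae x p₀ hrp₀ hp₀s _ (hyp_ae _)
    have e3 : ⇑(Vsf y) =ᵐ[μ] ⇑(T p₀ hrp₀ hp₀s (yp y)) := hVsf_ae y p₀ hrp₀ hp₀s _ (hyp_ae _)
    rw [hsum, map_add] at e1
    filter_upwards [e1, e2, e3, Lp.coeFn_add (T p₀ hrp₀ hp₀s (yp x)) (T p₀ hrp₀ hp₀s (yp y)),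
      Lp.coeFn_add (Vsf x) (Vsf y)] with ω h1 h2 h3 h4 h5
    rw [h1, h4, h5]
    simp only [Pi.add_apply]
    rw [h2, h3]
  -- homogeneity
  have hsmul : ∀ (c : ℂ) (x : Lp.simpleFunc ℂ s μ), Vsf (c • x) = c • Vsf x := by
    intro c x
    apply Lp.ext
    have hsc : yp (c • x) = c • yp x := by
      apply Lp.ext
      filter_upwards [hyp_ae (c • x), hyp_ae x, Lp.coeFn_smul c (yp x),
        Lp.coeFn_smul c ((x : Lp.simpleFunc ℂ s μ) : Lp ℂ s μ)] with ω h1 h2 h3 h4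
      rw [h1, h3]
      show (((c • x : Lp.simpleFunc ℂ s μ) : Lp ℂ s μ) : Ω → ℂ) ω = _
      rw [Lp.simpleFunc.coe_smul, h4]
      simp only [Pi.smul_apply]
      rw [h2]
    have e1 : ⇑(Vsf (c • x)) =ᵐ[μ] ⇑(T p₀ hrp₀ hp₀s (yp (c • x))) :=
      hVsf_ae (c • x) p₀ hrp₀ hp₀s _ (hyp_ae _)
    have e2 : ⇑(Vsf x) =ᵐ[μ] ⇑(T p₀ hrp₀ hp₀s (yp x)) := hVsf_ae x p₀ hrp₀ hp₀s _ (hyp_ae _)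
    rw [hsc, _root_.map_smul] at e1
    filter_upwards [e1, e2, Lp.coeFn_smul c (T p₀ hrp₀ hp₀s (yp x)),
      Lp.coeFn_smul c (Vsf x)] with ω h1 h2 h3 h4
    rw [h1, h3, h4]
    simp only [Pi.smul_apply]
    rw [h2]
  -- norm bound on simple functions
  have hnorm : ∀ x : Lp.simpleFunc ℂ s μ, ‖Vsf x‖ ≤ K * ‖x‖ := by
    intro x
    have h1 : eLpNorm (⇑(Vsf x)) s μ ≤ ENNReal.ofReal K * eLpNorm (⇑(x : Lp ℂ s μ)) s μ := by
      rw [eLpNorm_congr_ae (MemLp.coeFn_toLp _)]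
      refine (main _ (hφmem x)).trans ?_
      rw [eLpNorm_congr_ae (hφae x)]
    have hb : ENNReal.ofReal K * eLpNorm (⇑(x : Lp ℂ s μ)) s μ ≠ ∞ :=
      ENNReal.mul_ne_top ENNReal.ofReal_ne_top (Lp.eLpNorm_ne_top _)
    calc ‖Vsf x‖ = (eLpNorm (⇑(Vsf x)) s μ).toReal := Lp.norm_def _
      _ ≤ (ENNReal.ofReal K * eLpNorm (⇑(x : Lp ℂ s μ)) s μ).toReal := ENNReal.toReal_mono hb h1
      _ = K * ‖x‖ := by
          rw [ENNReal.toReal_mul, ENNReal.toReal_ofReal hK.le, ← Lp.norm_def]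
          rfl
  -- build the continuous linear map on simple functions and extend
  set Vlin : Lp.simpleFunc ℂ s μ →ₗ[ℂ] Lp ℂ s μ :=
    { toFun := Vsf, map_add' := hadd, map_smul' := hsmul } with hVlin
  set Vc : Lp.simpleFunc ℂ s μ →L[ℂ] Lp ℂ s μ := Vlin.mkContinuous K hnorm with hVc
  set e : Lp.simpleFunc ℂ s μ →L[ℂ] Lp ℂ s μ := Lp.simpleFunc.coeToLp Ω ℂ ℂ with he
  have he_bound : ∀ x : Lp.simpleFunc ℂ s μ, ‖x‖ ≤ (1 : ℝ≥0) * ‖e x‖ := fun x => by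
    rw [NNReal.coe_one, one_mul]; rfl
  have hdense : DenseRange ⇑e := Lp.simpleFunc.denseRange hsne
  set V : Lp ℂ s μ →L[ℂ] Lp ℂ s μ :=
    Vc.extend e with hV
  have hVnorm : ‖V‖ ≤ K := by
    refine (Vc.opNorm_extend_le hdense he_bound).trans ?_
    rw [NNReal.coe_one, one_mul]
    exact Vlin.mkContinuous_norm_le hK.le hnorm
  have hVe : ∀ z : Lp.simpleFunc ℂ s μ, V ((z : Lp ℂ s μ)) = Vsf z := fun z =>
    ContinuousLinearMap.extend_eq Vc hdense (e.isUniformEmbedding_of_bound he_bound).isUniformInducing z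
  -- V satisfies the consistency property
  have hVp : ∀ (p : ℝ≥0∞) [Fact (1 ≤ p)] (hp : r < p) (hps : p < s)
      (x : Lp ℂ s μ) (y : Lp ℂ p μ), (⇑x =ᵐ[μ] ⇑y) → ⇑(V x) =ᵐ[μ] ⇑(T p hp hps y) := by
    intro p _ hp hps x y hxy
    set F : Ω → ℂ := ⇑x with hF
    have hsm : StronglyMeasurable F := Lp.stronglyMeasurable x
    have hFs : MemLp F s μ := Lp.memLp x
    have hFp : MemLp F p μ := (Lp.memLp y).ae_eq hxy.symm
    haveI : TopologicalSpace.SeparableSpace (Set.range F ∪ {0} : Set ℂ) :=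
      hsm.separableSpace_range_union_singleton
    set fn : ℕ → (SimpleFunc Ω ℂ) := fun n =>
      SimpleFunc.approxOn F hsm.measurable (Set.range F ∪ {0}) 0 (by simp) n with hfn
    have hfn_s : ∀ n, MemLp (fn n) s μ := fun n =>
      SimpleFunc.memLp_approxOn_range hsm.measurable hFs n
    have hfn_p : ∀ n, MemLp (fn n) p μ := fun n =>
      SimpleFunc.memLp_approxOn_range hsm.measurable hFp n
    set a : ℕ → Lp ℂ s μ := fun n => (hfn_s n).toLp (fn n) with ha
    set b : ℕ → Lp ℂ p μ := fun n => (hfn_p n).toLp (fn n) with hb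
    have hae_n : ∀ n, ⇑(V (a n)) =ᵐ[μ] ⇑(T p hp hps (b n)) := by
      intro n
      have hz : a n = ((SimpleFunc.toLp (fn n) (hfn_s n) : Lp.simpleFunc ℂ s μ) : Lp ℂ s μ) :=
        rfl
      rw [hz, hVe]
      refine hVsf_ae _ p hp hps (b n) ?_
      have h1 : ⇑(b n) =ᵐ[μ] ⇑(fn n) := MemLp.coeFn_toLp (hfn_p n)
      have h2 : (((SimpleFunc.toLp (fn n) (hfn_s n) : Lp.simpleFunc ℂ s μ) : Lp ℂ s μ)
          : Ω → ℂ) =ᵐ[μ] ⇑(fn n) := by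
        rw [Lp.simpleFunc.toLp_eq_toLp]
        exact MemLp.coeFn_toLp _
      exact h1.trans h2.symm
    have ha_tend : Tendsto a atTop (𝓝 x) := by
      have h := SimpleFunc.tendsto_approxOn_range_Lp (p := s) hsne hsm.measurable hFs
      rwa [Lp.toLp_coeFn x (Lp.memLp x)] at h
    have hb_tend : Tendsto b atTop (𝓝 y) := by
      have h := SimpleFunc.tendsto_approxOn_range_Lp (p := p) ((hps.trans hs).ne)
        hsm.measurable hFp
      have hy : hFp.toLp F = y := by
        apply Lp.ext
        exact (MemLp.coeFn_toLp _).trans hxy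
      rwa [hy] at h
    have hVa : TendstoInMeasure μ (fun n => ⇑(V (a n))) atTop ⇑(V x) :=
      tendstoInMeasure_of_tendsto_Lp ((V.continuous.tendsto x).comp ha_tend)
    have hTb' : TendstoInMeasure μ (fun n => ⇑(T p hp hps (b n))) atTop ⇑(T p hp hps y) :=
      tendstoInMeasure_of_tendsto_Lp (((T p hp hps).continuous.tendsto y).comp hb_tend)
    obtain ⟨ψ₁, hψ₁mono, hψ₁⟩ := hVa.exists_seq_tendsto_ae
    have hTb'' : TendstoInMeasure μ (fun n => ⇑(T p hp hps (b (ψ₁ n)))) atTop ⇑(T p hp hps y) :=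
      fun ε hε => (hTb' ε hε).comp hψ₁mono.tendsto_atTop
    obtain ⟨ψ₂, hψ₂mono, hψ₂⟩ := hTb''.exists_seq_tendsto_ae
    have hψ₁' : ∀ᵐ ω ∂μ, Tendsto (fun i => (V (a (ψ₁ (ψ₂ i)))) ω) atTop (𝓝 ((V x) ω)) := by
      filter_upwards [hψ₁] with ω hω
      exact hω.comp hψ₂mono.tendsto_atTop
    have hall : ∀ᵐ ω ∂μ, ∀ n, (V (a n)) ω = (T p hp hps (b n)) ω :=
      (ae_all_iff).2 fun n => hae_n n
    filter_upwards [hψ₁', hψ₂, hall] with ω h1 h2 h3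
    refine tendsto_nhds_unique ?_ h2
    exact h1.congr fun i => h3 (ψ₁ (ψ₂ i))
  refine ⟨V, ?_, hVnorm, ?_⟩
  · intro p _ hp hps x y hxy
    exact hVp p hp hps x y hxy
  · intro V' hV'
    have hagree : ∀ z : Lp.simpleFunc ℂ s μ, V' ((z : Lp ℂ s μ)) = V ((z : Lp ℂ s μ)) := by
      intro z
      apply Lp.ext
      have h1 : ⇑(V' ((z : Lp ℂ s μ))) =ᵐ[μ] ⇑(T p₀ hrp₀ hp₀s (yp z)) :=
        hV' p₀ hrp₀ hp₀s _ (yp z) (hyp_ae z).symm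
      have h2 : ⇑(V ((z : Lp ℂ s μ))) =ᵐ[μ] ⇑(T p₀ hrp₀ hp₀s (yp z)) :=
        hVp p₀ hrp₀ hp₀s _ (yp z) (hyp_ae z).symm
      exact h1.trans h2.symm
    apply ContinuousLinearMap.coeFn_injective
    exact hdense.equalizer V'.continuous V.continuous (funext fun z => hagree z)
end

section
/- Let (Ω, Σ, μ) be a measure space, let 1 ≤ r < s ≤ ∞, let A be a normed algebra over ℂ, and let M > 0. Suppose that for each p ∈ (r,s) there is a map Ψ_p : A → B(L^p(μ)) (bounded operators on the complex space L^p(μ)) that is linear and multiplicative, with ‖Ψ_p(a)‖ ≤ M‖a‖ for all a ∈ A, and that the family is consistent: Ψ_p(a)x = Ψ_q(a)x μ-almost everywhere whenever a ∈ A, p, q ∈ (r,s), and x ∈ L^p(μ) ∩ L^q(μ). Then there exists a linear and multiplicative map Ψ_r : A → B(L^r(μ)) such that ‖Ψ_r(a)‖ ≤ M‖a‖ for all a ∈ A, and Ψ_r(a)x = Ψ_p(a)x μ-almost everywhere for every a ∈ A, p ∈ (r,s), and x ∈ L^r(μ) ∩ L^p(μ). -/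
open MeasureTheory Filter Topology ENNReal

open NNReal in
private lemma tendsto_rpow_aux {c : ℕ → ℝ≥0∞} {C : ℝ≥0∞} (hC : C ≠ ∞) (hcf : ∀ n, c n ≠ ∞)
    (hc : Tendsto c atTop (𝓝 C)) {t : ℕ → ℝ} {T : ℝ} (hT : 0 < T)
    (ht : Tendsto t atTop (𝓝 T)) :
    Tendsto (fun n => c n ^ t n) atTop (𝓝 (C ^ T)) := by
  have h1 : Tendsto (fun n => (c n).toNNReal) atTop (𝓝 C.toNNReal) :=
    (ENNReal.tendsto_toNNReal hC).comp hc
  have h2 : Tendsto (fun n => (((c n).toNNReal ^ t n : ℝ≥0) : ℝ≥0∞)) atTop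
      (𝓝 ((C.toNNReal ^ T : ℝ≥0) : ℝ≥0∞)) := ENNReal.tendsto_coe.2 (h1.nnrpow ht (Or.inr hT))
  have hpos : ∀ᶠ n in atTop, 0 < t n := ht.eventually (eventually_gt_nhds hT)
  have heq : (fun n => (((c n).toNNReal ^ t n : ℝ≥0) : ℝ≥0∞)) =ᶠ[atTop] fun n => c n ^ t n := by
    filter_upwards [hpos] with n hn
    rw [ENNReal.coe_rpow_of_nonneg _ hn.le, ENNReal.coe_toNNReal (hcf n)]
  have hfin : ((C.toNNReal ^ T : ℝ≥0) : ℝ≥0∞) = C ^ T := by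
    rw [ENNReal.coe_rpow_of_nonneg _ hT.le, ENNReal.coe_toNNReal hC]
  exact hfin ▸ Filter.Tendsto.congr' heq h2

attribute [local instance] MeasureTheory.Lp.simpleFunc.smul
  MeasureTheory.Lp.simpleFunc.module MeasureTheory.Lp.simpleFunc.normedSpace
  MeasureTheory.Lp.simpleFunc.isBoundedSMul

set_option maxHeartbeats 2000000

/-- Let `(Ω, Σ, μ)` be a measure space, `1 ≤ r < s ≤ ∞`, `A` a normed
algebra over `ℂ` and `M > 0`.  If for each `p ∈ (r,s)` there is a linear multiplicative map
`Ψ_p : A → B(L^p(μ))` with `‖Ψ_p(a)‖ ≤ M‖a‖`, and the family is consistent (`Ψ_p(a)x = Ψ_q(a)x`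
a.e. for `x ∈ L^p ∩ L^q`), then there is a linear multiplicative map `Ψ_r : A → B(L^r(μ))`
with `‖Ψ_r(a)‖ ≤ M‖a‖` and `Ψ_r(a)x = Ψ_p(a)x` a.e. for all `a`, `p ∈ (r,s)` and
`x ∈ L^r ∩ L^p`. -/
theorem stmt12 {Ω : Type*} [MeasurableSpace Ω] (μ : Measure Ω)
    {A : Type*} [NormedRing A] [NormedAlgebra ℂ A]
    (r s : ℝ≥0∞) (hr : 1 ≤ r) (hrs : r < s) (hs : s ≤ ∞) (M : ℝ) (hM : 0 < M)
    (Ψ : ∀ (p : ℝ≥0∞) [Fact (1 ≤ p)], r < p → p < s → A → Lp ℂ p μ →L[ℂ] Lp ℂ p μ)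
    (hadd : ∀ (p : ℝ≥0∞) [Fact (1 ≤ p)] (hp : r < p) (hps : p < s) (a b : A),
      Ψ p hp hps (a + b) = Ψ p hp hps a + Ψ p hp hps b)
    (hsmul : ∀ (p : ℝ≥0∞) [Fact (1 ≤ p)] (hp : r < p) (hps : p < s) (c : ℂ) (a : A),
      Ψ p hp hps (c • a) = c • Ψ p hp hps a)
    (hmul : ∀ (p : ℝ≥0∞) [Fact (1 ≤ p)] (hp : r < p) (hps : p < s) (a b : A),
      Ψ p hp hps (a * b) = (Ψ p hp hps a).comp (Ψ p hp hps b))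
    (hbound : ∀ (p : ℝ≥0∞) [Fact (1 ≤ p)] (hp : r < p) (hps : p < s) (a : A),
      ‖Ψ p hp hps a‖ ≤ M * ‖a‖)
    (hcons : ∀ (p q : ℝ≥0∞) [Fact (1 ≤ p)] [Fact (1 ≤ q)]
        (hp : r < p) (hps : p < s) (hq : r < q) (hqs : q < s) (a : A)
        (x : Lp ℂ p μ) (y : Lp ℂ q μ), (x : Ω → ℂ) =ᵐ[μ] (y : Ω → ℂ) →
        (Ψ p hp hps a x : Ω → ℂ) =ᵐ[μ] (Ψ q hq hqs a y : Ω → ℂ)) :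
    haveI : Fact (1 ≤ r) := ⟨hr⟩
    ∃ Ψr : A → Lp ℂ r μ →L[ℂ] Lp ℂ r μ,
      (∀ a b : A, Ψr (a + b) = Ψr a + Ψr b) ∧
      (∀ (c : ℂ) (a : A), Ψr (c • a) = c • Ψr a) ∧
      (∀ a b : A, Ψr (a * b) = (Ψr a).comp (Ψr b)) ∧
      (∀ a : A, ‖Ψr a‖ ≤ M * ‖a‖) ∧
      (∀ (a : A) (p : ℝ≥0∞) [Fact (1 ≤ p)] (hp : r < p) (hps : p < s)
        (x : Lp ℂ r μ) (y : Lp ℂ p μ), (x : Ω → ℂ) =ᵐ[μ] (y : Ω → ℂ) →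
          (Ψr a x : Ω → ℂ) =ᵐ[μ] (Ψ p hp hps a y : Ω → ℂ)) := by
  haveI : Fact (1 ≤ r) := ⟨hr⟩
  have hrtop : r ≠ ∞ := hrs.ne_top
  have hr0 : r ≠ 0 := by positivity
  have hrT : 0 < r.toReal := ENNReal.toReal_pos hr0 hrtop
  set δ : ℝ≥0∞ := min (r + 1) s with hδ_def
  have hrδ : r < δ := lt_min (ENNReal.lt_add_right hrtop one_ne_zero) hrs
  have hδtop : δ ≠ ∞ := ne_top_of_le_ne_top (by finiteness) (min_le_left _ _)
  have hδs : δ ≤ s := min_le_right _ _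
  set P : ℕ → ℝ≥0∞ := fun n => r + (δ - r) * ((n : ℝ≥0∞) + 2)⁻¹ with hP_def
  have hsub0 : δ - r ≠ 0 := (tsub_pos_of_lt hrδ).ne'
  have hsubtop : δ - r ≠ ∞ := ne_top_of_le_ne_top hδtop tsub_le_self
  have hP_gt : ∀ n, r < P n := fun n =>
    ENNReal.lt_add_right hrtop (mul_ne_zero hsub0 (ENNReal.inv_ne_zero.2 (by finiteness)))
  have hP_lt_δ : ∀ n, P n < δ := by
    intro n
    have h1 : (δ - r) * ((n : ℝ≥0∞) + 2)⁻¹ < δ - r := by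
      calc (δ - r) * ((n : ℝ≥0∞) + 2)⁻¹ < (δ - r) * 1 := by
            rw [ENNReal.mul_lt_mul_iff_right hsub0 hsubtop]
            rw [ENNReal.inv_lt_one]
            exact lt_of_lt_of_le one_lt_two le_add_self
        _ = δ - r := mul_one _
    calc P n < r + (δ - r) := ENNReal.add_lt_add_left hrtop h1
      _ = δ := add_tsub_cancel_of_le hrδ.le
  have hP_lt_s : ∀ n, P n < s := fun n => (hP_lt_δ n).trans_le hδs
  have hP_ne_top : ∀ n, P n ≠ ∞ := fun n => ne_top_of_lt (lt_of_lt_of_le (hP_lt_δ n) hδtop.lt_top.le)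
  have hP_le_δ : ∀ n, P n ≤ δ := fun n => (hP_lt_δ n).le
  have hP1 : ∀ n, 1 ≤ P n := fun n => hr.trans (hP_gt n).le
  have hP_ne_zero : ∀ n, P n ≠ 0 := fun n => (lt_of_lt_of_le zero_lt_one (hP1 n)).ne'
  have hP_tendsto : Tendsto P atTop (𝓝 r) := by
    have h1 : Tendsto (fun n : ℕ => ((n : ℝ≥0∞) + 2)⁻¹) atTop (𝓝 0) := by
      have : (fun n : ℕ => ((n : ℝ≥0∞) + 2)⁻¹) = fun n : ℕ => (((n + 2 : ℕ) : ℝ≥0∞))⁻¹ := by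
        funext n; push_cast; ring_nf
      rw [this]
      exact ENNReal.tendsto_inv_nat_nhds_zero.comp (tendsto_add_atTop_nat 2)
    have h2 : Tendsto (fun n : ℕ => (δ - r) * ((n : ℝ≥0∞) + 2)⁻¹) atTop (𝓝 0) := by
      have := ENNReal.Tendsto.const_mul h1 (Or.inr hsubtop)
      simpa using this
    have h3 := Filter.Tendsto.const_add r h2
    simpa using h3
  have hPT : Tendsto (fun n => (P n).toReal) atTop (𝓝 r.toReal) :=
    (ENNReal.tendsto_toReal hrtop).comp hP_tendsto
  -- simple functions are in every Lp
  have hsm : ∀ (x : Lp.simpleFunc ℂ r μ) (q : ℝ≥0∞), MemLp (⇑(x : Lp ℂ r μ)) q μ := by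
    intro x q
    have hx : MemLp (⇑(Lp.simpleFunc.toSimpleFunc x)) r μ := Lp.simpleFunc.memLp x
    have hfin := (SimpleFunc.memLp_iff hr0 hrtop).mp hx
    exact (SimpleFunc.memLp_of_finite_measure_preimage q hfin).ae_eq
      (Lp.simpleFunc.toSimpleFunc_eq_toFun x)
  -- norms of a fixed simple function converge
  have hnorm_tendsto : ∀ x : Lp.simpleFunc ℂ r μ,
      Tendsto (fun n => eLpNorm (⇑(x : Lp ℂ r μ)) (P n) μ) atTop
        (𝓝 (eLpNorm (⇑(x : Lp ℂ r μ)) r μ)) := by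
    intro x
    set f : Ω → ℂ := ⇑(x : Lp ℂ r μ) with hf_def
    have hfm : AEStronglyMeasurable f μ := (Lp.memLp _).aestronglyMeasurable
    have hptw : ∀ (c : ℝ≥0∞), c ≠ ∞ →
        Tendsto (fun n => c ^ (P n).toReal) atTop (𝓝 (c ^ r.toReal)) := fun c hc =>
      tendsto_rpow_aux hc (fun _ => hc) tendsto_const_nhds hrT hPT
    have hexp_le : ∀ n, r.toReal ≤ (P n).toReal ∧ (P n).toReal ≤ δ.toReal := fun n =>
      ⟨ENNReal.toReal_mono (hP_ne_top n) (hP_gt n).le, ENNReal.toReal_mono hδtop (hP_le_δ n)⟩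
    have hlint : ∀ (q : ℝ≥0∞), q ≠ 0 → q ≠ ∞ →
        (∫⁻ ω, (‖f ω‖₊ : ℝ≥0∞) ^ q.toReal ∂μ) ≠ ∞ := by
      intro q hq0 hqtop
      exact (lintegral_rpow_enorm_lt_top_of_eLpNorm_lt_top hq0 hqtop (hsm x q).2).ne
    have hint : Tendsto (fun n => ∫⁻ ω, (‖f ω‖₊ : ℝ≥0∞) ^ (P n).toReal ∂μ) atTop
        (𝓝 (∫⁻ ω, (‖f ω‖₊ : ℝ≥0∞) ^ r.toReal ∂μ)) := by
      refine tendsto_lintegral_of_dominated_convergence'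
        (fun ω => (‖f ω‖₊ : ℝ≥0∞) ^ r.toReal + (‖f ω‖₊ : ℝ≥0∞) ^ δ.toReal)
        (fun n => hfm.enorm.pow_const _) ?_ ?_ ?_
      · intro n
        refine Filter.Eventually.of_forall fun ω => ?_
        rcases le_total ((‖f ω‖₊ : ℝ≥0∞)) 1 with h1 | h1
        · exact le_trans (ENNReal.rpow_le_rpow_of_exponent_ge h1 (hexp_le n).1) le_self_add
        · exact le_trans (ENNReal.rpow_le_rpow_of_exponent_le h1 (hexp_le n).2) le_add_self
      · rw [lintegral_add_left' (show
          AEMeasurable (fun ω => (‖f ω‖₊ : ℝ≥0∞) ^ r.toReal) μ from hfm.enorm.pow_const _)]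
        exact ENNReal.add_ne_top.2 ⟨hlint r hr0 hrtop,
          hlint δ (lt_of_le_of_lt (zero_le (a := r)) hrδ).ne' hδtop⟩
      · exact Filter.Eventually.of_forall fun ω => hptw _ ENNReal.coe_ne_top
    have h1n : Tendsto (fun n : ℕ => 1 / (P n).toReal) atTop (𝓝 (1 / r.toReal)) := by
      simp only [one_div]
      exact hPT.inv₀ hrT.ne'
    have := tendsto_rpow_aux (hlint r hr0 hrtop)
      (fun n => hlint (P n) (hP_ne_zero n) (hP_ne_top n)) hint
      (by positivity : (0:ℝ) < 1 / r.toReal) h1n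
    rw [eLpNorm_eq_lintegral_rpow_enorm_toReal hr0 hrtop]
    exact this.congr fun n =>
      (eLpNorm_eq_lintegral_rpow_enorm_toReal (hP_ne_zero n) (hP_ne_top n)).symm
  haveI hF0 : Fact (1 ≤ P 0) := ⟨hP1 0⟩
  have master : ∀ (a : A) (x : Lp.simpleFunc ℂ r μ), ∃ z : Lp ℂ r μ,
      (⇑z =ᵐ[μ] ⇑(Ψ (P 0) (hP_gt 0) (hP_lt_s 0) a ((hsm x (P 0)).toLp _))) ∧
      ‖z‖ ≤ M * ‖a‖ * ‖(x : Lp ℂ r μ)‖ := by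
    intro a x
    set f : Ω → ℂ := ⇑(x : Lp ℂ r μ) with hf_def
    set g : Ω → ℂ := ⇑(Ψ (P 0) (hP_gt 0) (hP_lt_s 0) a ((hsm x (P 0)).toLp f)) with hg_def
    have hgm : AEStronglyMeasurable g μ := Lp.aestronglyMeasurable _
    set C : ℝ≥0∞ := ENNReal.ofReal (M * ‖a‖) with hC_def
    have hMa : 0 ≤ M * ‖a‖ := mul_nonneg hM.le (norm_nonneg a)
    have hg_pn : ∀ n, eLpNorm g (P n) μ ≤ C * eLpNorm f (P n) μ := by
      intro n
      haveI : Fact (1 ≤ P n) := ⟨hP1 n⟩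
      have hc : g =ᵐ[μ] ⇑(Ψ (P n) (hP_gt n) (hP_lt_s n) a ((hsm x (P n)).toLp f)) :=
        hcons (P 0) (P n) (hP_gt 0) (hP_lt_s 0) (hP_gt n) (hP_lt_s n) a _ _
          (((hsm x (P 0)).coeFn_toLp).trans ((hsm x (P n)).coeFn_toLp).symm)
      rw [eLpNorm_congr_ae hc]
      set z := Ψ (P n) (hP_gt n) (hP_lt_s n) a ((hsm x (P n)).toLp f) with hz
      have h1 : ‖z‖ ≤ (M * ‖a‖) * ‖(hsm x (P n)).toLp f‖ :=
        le_trans ((Ψ (P n) (hP_gt n) (hP_lt_s n) a).le_opNorm _)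
          (mul_le_mul_of_nonneg_right (hbound (P n) (hP_gt n) (hP_lt_s n) a) (norm_nonneg _))
      have h2 : eLpNorm (⇑z) (P n) μ = ENNReal.ofReal ‖z‖ := by
        rw [Lp.norm_def, ENNReal.ofReal_toReal (Lp.eLpNorm_ne_top z)]
      rw [h2]
      calc ENNReal.ofReal ‖z‖ ≤ ENNReal.ofReal ((M * ‖a‖) * ‖(hsm x (P n)).toLp f‖) :=
            ENNReal.ofReal_le_ofReal h1
        _ = C * ENNReal.ofReal ‖(hsm x (P n)).toLp f‖ := by rw [ENNReal.ofReal_mul hMa]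
        _ = C * eLpNorm f (P n) μ := by
            rw [Lp.norm_toLp, ENNReal.ofReal_toReal (hsm x (P n)).eLpNorm_ne_top]
    have hg_ptw : ∀ ω : Ω, Tendsto (fun n => (‖g ω‖₊ : ℝ≥0∞) ^ (P n).toReal) atTop
        (𝓝 ((‖g ω‖₊ : ℝ≥0∞) ^ r.toReal)) := fun ω =>
      tendsto_rpow_aux ENNReal.coe_ne_top (fun _ => ENNReal.coe_ne_top) tendsto_const_nhds hrT hPT
    have hDlim : Tendsto (fun n => C * eLpNorm f (P n) μ) atTop (𝓝 (C * eLpNorm f r μ)) :=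
      ENNReal.Tendsto.const_mul (hnorm_tendsto x) (Or.inr ENNReal.ofReal_ne_top)
    have hCfin : C * eLpNorm f r μ ≠ ∞ :=
      ENNReal.mul_ne_top ENNReal.ofReal_ne_top (Lp.eLpNorm_ne_top _)
    have hclaim : eLpNorm g r μ ≤ C * eLpNorm f r μ := by
      have hF1 : (∫⁻ ω, (‖g ω‖₊ : ℝ≥0∞) ^ r.toReal ∂μ)
          ≤ atTop.liminf fun n => ∫⁻ ω, (‖g ω‖₊ : ℝ≥0∞) ^ (P n).toReal ∂μ := by
        refine le_trans (le_of_eq (lintegral_congr fun ω => ?_))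
          (lintegral_liminf_le' (fun n => hgm.enorm.pow_const _))
        exact ((hg_ptw ω).liminf_eq).symm
      have hF2 : ∀ n, (∫⁻ ω, (‖g ω‖₊ : ℝ≥0∞) ^ (P n).toReal ∂μ)
          ≤ (C * eLpNorm f (P n) μ) ^ (P n).toReal := by
        intro n
        have h3 : (∫⁻ ω, (‖g ω‖₊ : ℝ≥0∞) ^ (P n).toReal ∂μ)
            = (eLpNorm g (P n) μ) ^ (P n).toReal := by
          rw [eLpNorm_eq_lintegral_rpow_enorm_toReal (hP_ne_zero n) (hP_ne_top n),
            ← ENNReal.rpow_mul, one_div, inv_mul_cancel₀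
              (ENNReal.toReal_pos (hP_ne_zero n) (hP_ne_top n)).ne', ENNReal.rpow_one]
          rfl
        rw [h3]
        exact ENNReal.rpow_le_rpow (hg_pn n) ENNReal.toReal_nonneg
      have hF3 : (atTop.liminf fun n => (C * eLpNorm f (P n) μ) ^ (P n).toReal)
          = (C * eLpNorm f r μ) ^ r.toReal :=
        (tendsto_rpow_aux hCfin (fun n => ENNReal.mul_ne_top ENNReal.ofReal_ne_top
          (hsm x (P n)).eLpNorm_ne_top) hDlim hrT hPT).liminf_eq
      have h4 : (∫⁻ ω, (‖g ω‖₊ : ℝ≥0∞) ^ r.toReal ∂μ) ≤ (C * eLpNorm f r μ) ^ r.toReal :=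
        le_trans hF1 (le_trans (liminf_le_liminf (Filter.Eventually.of_forall hF2)) hF3.le)
      rw [eLpNorm_eq_lintegral_rpow_enorm_toReal hr0 hrtop]
      calc (∫⁻ ω, (‖g ω‖₊ : ℝ≥0∞) ^ r.toReal ∂μ) ^ (1 / r.toReal)
          ≤ ((C * eLpNorm f r μ) ^ r.toReal) ^ (1 / r.toReal) :=
            ENNReal.rpow_le_rpow h4 (by positivity)
        _ = C * eLpNorm f r μ := by
            rw [← ENNReal.rpow_mul, mul_one_div, div_self hrT.ne', ENNReal.rpow_one]
    have hg_mem : MemLp g r μ := ⟨hgm, lt_of_le_of_lt hclaim hCfin.lt_top⟩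
    refine ⟨hg_mem.toLp g, hg_mem.coeFn_toLp, ?_⟩
    rw [Lp.norm_toLp]
    calc (eLpNorm g r μ).toReal ≤ (C * eLpNorm f r μ).toReal :=
          ENNReal.toReal_mono hCfin hclaim
      _ = M * ‖a‖ * ‖(x : Lp ℂ r μ)‖ := by
          rw [ENNReal.toReal_mul, ENNReal.toReal_ofReal hMa, Lp.norm_def]
  classical
  set Ψ₀ := Ψ (P 0) (hP_gt 0) (hP_lt_s 0) with hΨ₀_def
  set Y : Lp.simpleFunc ℂ r μ → Lp ℂ (P 0) μ := fun x => (hsm x (P 0)).toLp _ with hY_def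
  set F : A → Lp.simpleFunc ℂ r μ → Lp ℂ r μ := fun a x => (master a x).choose with hF_def
  have hFspec : ∀ a x, ⇑(F a x) =ᵐ[μ] ⇑(Ψ₀ a (Y x)) := fun a x => (master a x).choose_spec.1
  have hFnorm : ∀ a x, ‖F a x‖ ≤ M * ‖a‖ * ‖(x : Lp ℂ r μ)‖ := fun a x =>
    (master a x).choose_spec.2
  have hYcoe : ∀ x, ⇑(Y x) =ᵐ[μ] ⇑(x : Lp ℂ r μ) := fun x => (hsm x (P 0)).coeFn_toLp
  have hYadd : ∀ x y : Lp.simpleFunc ℂ r μ, Y (x + y) = Y x + Y y := by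
    intro x y
    apply Lp.ext
    have hc : ((x + y : Lp.simpleFunc ℂ r μ) : Lp ℂ r μ) = (x : Lp ℂ r μ) + (y : Lp ℂ r μ) := rfl
    filter_upwards [hYcoe (x + y), hYcoe x, hYcoe y,
      Lp.coeFn_add (x : Lp ℂ r μ) (y : Lp ℂ r μ), Lp.coeFn_add (Y x) (Y y)] with ω h1 h2 h3 h4 h5
    rw [h1, hc, h4, h5]
    simp only [Pi.add_apply]
    rw [← h2, ← h3]
  have hYsmul : ∀ (c : ℂ) (x : Lp.simpleFunc ℂ r μ), Y (c • x) = c • Y x := by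
    intro c x
    apply Lp.ext
    have hc : ((c • x : Lp.simpleFunc ℂ r μ) : Lp ℂ r μ) = c • (x : Lp ℂ r μ) :=
      Lp.simpleFunc.coe_smul c x
    filter_upwards [hYcoe (c • x), hYcoe x, Lp.coeFn_smul c ((x : Lp ℂ r μ)),
      Lp.coeFn_smul c (Y x)] with ω h1 h2 h3 h4
    rw [h1, hc, h3, h4]
    simp only [Pi.smul_apply]
    rw [← h2]
  have hFadd : ∀ (a : A) (x y : Lp.simpleFunc ℂ r μ), F a (x + y) = F a x + F a y := by
    intro a x y
    apply Lp.ext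
    have e1 : Ψ₀ a (Y (x + y)) = Ψ₀ a (Y x) + Ψ₀ a (Y y) := by rw [hYadd, map_add]
    filter_upwards [hFspec a (x + y), hFspec a x, hFspec a y, Lp.coeFn_add (F a x) (F a y),
      Lp.coeFn_add (Ψ₀ a (Y x)) (Ψ₀ a (Y y))] with ω h1 h2 h3 h4 h5
    rw [h1, e1, h5, h4]
    simp only [Pi.add_apply]
    rw [← h2, ← h3]
  have hFsmul : ∀ (a : A) (c : ℂ) (x : Lp.simpleFunc ℂ r μ), F a (c • x) = c • F a x := by
    intro a c x
    apply Lp.ext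
    have e1 : Ψ₀ a (Y (c • x)) = c • Ψ₀ a (Y x) := by rw [hYsmul, _root_.map_smul]
    filter_upwards [hFspec a (c • x), hFspec a x, Lp.coeFn_smul c (F a x),
      Lp.coeFn_smul c (Ψ₀ a (Y x))] with ω h1 h2 h3 h4
    rw [h1, e1, h4, h3]
    simp only [Pi.smul_apply]
    rw [← h2]
  set Flin : A → Lp.simpleFunc ℂ r μ →ₗ[ℂ] Lp ℂ r μ := fun a =>
    { toFun := F a, map_add' := hFadd a, map_smul' := hFsmul a } with hFlin_def
  set Fc : A → Lp.simpleFunc ℂ r μ →L[ℂ] Lp ℂ r μ := fun a =>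
    LinearMap.mkContinuous (Flin a) (M * ‖a‖) (fun x => hFnorm a x) with hFc_def
  set e : Lp.simpleFunc ℂ r μ →L[ℂ] Lp ℂ r μ :=
    (Lp.simpleFunc.coeToLp Ω ℂ ℂ : Lp.simpleFunc ℂ r μ →L[ℂ] Lp ℂ r μ) with he_def
  have he_dense : DenseRange ⇑e := Lp.simpleFunc.denseRange hrtop
  have he_norm : ∀ x : Lp.simpleFunc ℂ r μ, ‖x‖ ≤ ((1 : NNReal) : ℝ) * ‖e x‖ := fun x => by
    rw [NNReal.coe_one, one_mul]
    exact le_of_eq rfl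
  set Ψr : A → Lp ℂ r μ →L[ℂ] Lp ℂ r μ := fun a =>
    (Fc a).extend e with hΨr_def
  have hextend_eq : ∀ a x, Ψr a (e x) = Fc a x := fun a x =>
    ContinuousLinearMap.extend_eq _ he_dense
      (ContinuousLinearMap.isUniformEmbedding_of_bound e he_norm).isUniformInducing _
  have hΨr_norm : ∀ a, ‖Ψr a‖ ≤ M * ‖a‖ := by
    intro a
    have h1 := ContinuousLinearMap.opNorm_extend_le (Fc a) he_dense he_norm
    have h2 : ‖Fc a‖ ≤ M * ‖a‖ :=
      LinearMap.mkContinuous_norm_le _ (mul_nonneg hM.le (norm_nonneg a)) _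
    calc ‖Ψr a‖ ≤ ((1 : NNReal) : ℝ) * ‖Fc a‖ := h1
      _ = ‖Fc a‖ := by simp
      _ ≤ M * ‖a‖ := h2
  have hmain : ∀ (a : A) (p : ℝ≥0∞) [Fact (1 ≤ p)] (hp : r < p) (hps : p < s)
      (x : Lp ℂ r μ) (y : Lp ℂ p μ), (⇑x =ᵐ[μ] ⇑y) →
      ⇑(Ψr a x) =ᵐ[μ] ⇑(Ψ p hp hps a y) := by
    intro a p instp hp hps x y hxy
    have hp0 : p ≠ 0 := (lt_of_lt_of_le zero_lt_one (hr.trans hp.le)).ne'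
    have hptop : p ≠ ∞ := hps.ne_top
    have hxm := (Lp.memLp x).aestronglyMeasurable
    set f₀ : Ω → ℂ := hxm.mk ⇑x with hf₀_def
    have hf₀sm : StronglyMeasurable f₀ := hxm.stronglyMeasurable_mk
    have hf₀meas : Measurable f₀ := hf₀sm.measurable
    have hxf₀ : ⇑x =ᵐ[μ] f₀ := hxm.ae_eq_mk
    have hf₀r : MemLp f₀ r μ := (Lp.memLp x).ae_eq hxf₀
    have hf₀p : MemLp f₀ p μ := (Lp.memLp y).ae_eq (hxy.symm.trans hxf₀)
    set sn : ℕ → SimpleFunc Ω ℂ :=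
      fun n => SimpleFunc.approxOn f₀ hf₀meas (Set.range f₀ ∪ {0}) 0 (by simp) n with hsn_def
    have hsn_r : ∀ n, MemLp (⇑(sn n)) r μ := fun n =>
      SimpleFunc.memLp_approxOn_range hf₀meas hf₀r n
    have hsn_p : ∀ n, MemLp (⇑(sn n)) p μ := fun n =>
      SimpleFunc.memLp_approxOn_range hf₀meas hf₀p n
    set xn : ℕ → Lp.simpleFunc ℂ r μ := fun n => SimpleFunc.toLp (sn n) (hsn_r n) with hxn_def
    set yn : ℕ → Lp ℂ p μ := fun n => (hsn_p n).toLp (sn n) with hyn_def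
    have hxn_coe : ∀ n, ⇑(e (xn n)) =ᵐ[μ] ⇑(sn n) := fun n => (hsn_r n).coeFn_toLp
    have hyn_coe : ∀ n, ⇑(yn n) =ᵐ[μ] ⇑(sn n) := fun n => (hsn_p n).coeFn_toLp
    have htr : Tendsto (fun n => eLpNorm (⇑(sn n) - f₀) r μ) atTop (𝓝 0) :=
      SimpleFunc.tendsto_approxOn_range_Lp_eLpNorm hrtop hf₀meas hf₀r.2
    have htp : Tendsto (fun n => eLpNorm (⇑(sn n) - f₀) p μ) atTop (𝓝 0) :=
      SimpleFunc.tendsto_approxOn_range_Lp_eLpNorm hptop hf₀meas hf₀p.2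
    have hex : Tendsto (fun n => (e (xn n) : Lp ℂ r μ)) atTop (𝓝 x) := by
      rw [tendsto_iff_norm_sub_tendsto_zero]
      have heq : ∀ n, ‖(e (xn n) : Lp ℂ r μ) - x‖ = (eLpNorm (⇑(sn n) - f₀) r μ).toReal := by
        intro n
        rw [Lp.norm_def]
        congr 1
        apply eLpNorm_congr_ae
        filter_upwards [Lp.coeFn_sub (e (xn n) : Lp ℂ r μ) x, hxn_coe n, hxf₀] with ω h1 h2 h3
        rw [h1]
        simp only [Pi.sub_apply]
        rw [h2, h3]
      have h4 := (ENNReal.tendsto_toReal (by simp)).comp htr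
      simp only [ENNReal.toReal_zero] at h4
      exact Tendsto.congr (fun n => (heq n).symm) h4
    have hey : Tendsto yn atTop (𝓝 y) := by
      rw [tendsto_iff_norm_sub_tendsto_zero]
      have heq : ∀ n, ‖yn n - y‖ = (eLpNorm (⇑(sn n) - f₀) p μ).toReal := by
        intro n
        rw [Lp.norm_def]
        congr 1
        apply eLpNorm_congr_ae
        filter_upwards [Lp.coeFn_sub (yn n) y, hyn_coe n, hxy.symm.trans hxf₀] with ω h1 h2 h3
        rw [h1]
        simp only [Pi.sub_apply]
        rw [h2, h3]
      have h4 := (ENNReal.tendsto_toReal (by simp)).comp htp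
      simp only [ENNReal.toReal_zero] at h4
      exact Tendsto.congr (fun n => (heq n).symm) h4
    have hexΨ : Tendsto (fun n => ‖Ψr a (e (xn n)) - Ψr a x‖) atTop (𝓝 0) :=
      tendsto_iff_norm_sub_tendsto_zero.mp (((Ψr a).continuous.tendsto x).comp hex)
    have heyΨ : Tendsto (fun n => ‖Ψ p hp hps a (yn n) - Ψ p hp hps a y‖) atTop (𝓝 0) :=
      tendsto_iff_norm_sub_tendsto_zero.mp (((Ψ p hp hps a).continuous.tendsto y).comp hey)
    have hm1 : TendstoInMeasure μ (fun n => ⇑(Ψr a (e (xn n)))) atTop ⇑(Ψr a x) := by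
      refine tendstoInMeasure_of_tendsto_eLpNorm (p := r) hr0
        (fun n => Lp.aestronglyMeasurable _) (Lp.aestronglyMeasurable _) ?_
      have h2 : ∀ n, eLpNorm (⇑(Ψr a (e (xn n))) - ⇑(Ψr a x)) r μ
          = ENNReal.ofReal ‖Ψr a (e (xn n)) - Ψr a x‖ := fun n => by
        rw [← eLpNorm_congr_ae (Lp.coeFn_sub _ _), Lp.norm_def,
          ENNReal.ofReal_toReal (Lp.eLpNorm_ne_top _)]
      have h3 : Tendsto (fun n => ENNReal.ofReal ‖Ψr a (e (xn n)) - Ψr a x‖) atTop (𝓝 0) := by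
        have h5 := ENNReal.tendsto_ofReal hexΨ
        simpa using h5
      exact h3.congr fun n => (h2 n).symm
    have hm2 : TendstoInMeasure μ (fun n => ⇑(Ψ p hp hps a (yn n))) atTop
        ⇑(Ψ p hp hps a y) := by
      refine tendstoInMeasure_of_tendsto_eLpNorm (p := p) hp0
        (fun n => Lp.aestronglyMeasurable _) (Lp.aestronglyMeasurable _) ?_
      have h2 : ∀ n, eLpNorm (⇑(Ψ p hp hps a (yn n)) - ⇑(Ψ p hp hps a y)) p μ
          = ENNReal.ofReal ‖Ψ p hp hps a (yn n) - Ψ p hp hps a y‖ := fun n => by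
        rw [← eLpNorm_congr_ae (Lp.coeFn_sub _ _), Lp.norm_def,
          ENNReal.ofReal_toReal (Lp.eLpNorm_ne_top _)]
      have h3 : Tendsto (fun n => ENNReal.ofReal ‖Ψ p hp hps a (yn n) - Ψ p hp hps a y‖)
          atTop (𝓝 0) := by
        have h5 := ENNReal.tendsto_ofReal heyΨ
        simpa using h5
      exact h3.congr fun n => (h2 n).symm
    obtain ⟨ns, hns_mono, hns_ae⟩ := hm1.exists_seq_tendsto_ae
    have hm2' : TendstoInMeasure μ (fun i => ⇑(Ψ p hp hps a (yn (ns i)))) atTop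
        ⇑(Ψ p hp hps a y) := fun ε hε => (hm2 ε hε).comp hns_mono.tendsto_atTop
    obtain ⟨ms, hms_mono, hms_ae⟩ := hm2'.exists_seq_tendsto_ae
    have heqn : ∀ n, ⇑(Ψr a (e (xn n))) =ᵐ[μ] ⇑(Ψ p hp hps a (yn n)) := by
      intro n
      have h1 : Ψr a (e (xn n)) = Fc a (xn n) := hextend_eq a (xn n)
      have h2 : ⇑(Fc a (xn n)) =ᵐ[μ] ⇑(Ψ₀ a (Y (xn n))) := hFspec a (xn n)
      have h3 : ⇑(Ψ₀ a (Y (xn n))) =ᵐ[μ] ⇑(Ψ p hp hps a (yn n)) := by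
        refine hcons (P 0) p (hP_gt 0) (hP_lt_s 0) hp hps a (Y (xn n)) (yn n) ?_
        exact (hYcoe (xn n)).trans ((hxn_coe n).trans (hyn_coe n).symm)
      rw [h1]
      exact h2.trans h3
    have hae_all : ∀ᵐ ω ∂μ, ∀ n, ⇑(Ψr a (e (xn n))) ω = ⇑(Ψ p hp hps a (yn n)) ω :=
      ae_all_iff.mpr fun n => heqn n
    filter_upwards [hns_ae, hms_ae, hae_all] with ω h1 h2 hall
    have h1' : Tendsto (fun j => ⇑(Ψ p hp hps a (yn (ns (ms j)))) ω) atTop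
        (𝓝 (⇑(Ψr a x) ω)) := by
      have h6 := h1.comp hms_mono.tendsto_atTop
      exact h6.congr fun j => hall (ns (ms j))
    exact tendsto_nhds_unique h1' h2
  have hFcspec : ∀ (a : A) (x : Lp.simpleFunc ℂ r μ), ⇑(Fc a x) =ᵐ[μ] ⇑(Ψ₀ a (Y x)) :=
    fun a x => hFspec a x
  have hadd' : ∀ a b : A, Ψr (a + b) = Ψr a + Ψr b := by
    intro a b
    refine ContinuousLinearMap.ext fun z => ?_
    refine he_dense.induction_on z ?_ ?_
    · exact isClosed_eq (Ψr (a + b)).continuous ((Ψr a).continuous.add (Ψr b).continuous)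
    · intro x
      rw [ContinuousLinearMap.add_apply, hextend_eq, hextend_eq, hextend_eq]
      apply Lp.ext
      have e1 : Ψ₀ (a + b) = Ψ₀ a + Ψ₀ b := hadd (P 0) (hP_gt 0) (hP_lt_s 0) a b
      filter_upwards [hFcspec (a + b) x, hFcspec a x, hFcspec b x,
        Lp.coeFn_add (Fc a x) (Fc b x), Lp.coeFn_add (Ψ₀ a (Y x)) (Ψ₀ b (Y x))]
        with ω h1 h2 h3 h4 h5
      rw [h1, e1, ContinuousLinearMap.add_apply, h5, h4]
      simp only [Pi.add_apply]
      rw [← h2, ← h3]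
  have hsmul' : ∀ (c : ℂ) (a : A), Ψr (c • a) = c • Ψr a := by
    intro c a
    refine ContinuousLinearMap.ext fun z => ?_
    refine he_dense.induction_on z ?_ ?_
    · exact isClosed_eq (Ψr (c • a)).continuous ((Ψr a).continuous.const_smul c)
    · intro x
      rw [ContinuousLinearMap.smul_apply, hextend_eq, hextend_eq]
      apply Lp.ext
      have e1 : Ψ₀ (c • a) = c • Ψ₀ a := hsmul (P 0) (hP_gt 0) (hP_lt_s 0) c a
      filter_upwards [hFcspec (c • a) x, hFcspec a x, Lp.coeFn_smul c (Fc a x),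
        Lp.coeFn_smul c (Ψ₀ a (Y x))] with ω h1 h2 h3 h4
      rw [h1, e1, ContinuousLinearMap.smul_apply, h4, h3]
      simp only [Pi.smul_apply]
      rw [← h2]
  have hmul' : ∀ a b : A, Ψr (a * b) = (Ψr a).comp (Ψr b) := by
    intro a b
    refine ContinuousLinearMap.ext fun z => ?_
    refine he_dense.induction_on z ?_ ?_
    · exact isClosed_eq (Ψr (a * b)).continuous ((Ψr a).comp (Ψr b)).continuous
    · intro x
      rw [ContinuousLinearMap.comp_apply, hextend_eq, hextend_eq]
      apply Lp.ext
      have h3 : ⇑(Ψr a (Fc b x)) =ᵐ[μ] ⇑(Ψ₀ a (Ψ₀ b (Y x))) :=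
        hmain a (P 0) (hP_gt 0) (hP_lt_s 0) (Fc b x) (Ψ₀ b (Y x)) (hFcspec b x)
      have e1 : Ψ₀ (a * b) (Y x) = Ψ₀ a (Ψ₀ b (Y x)) := by
        have e2 : Ψ₀ (a * b) = (Ψ₀ a).comp (Ψ₀ b) := hmul (P 0) (hP_gt 0) (hP_lt_s 0) a b
        rw [e2, ContinuousLinearMap.comp_apply]
      refine (hFcspec (a * b) x).trans ?_
      rw [e1]
      exact h3.symm
  exact ⟨Ψr, hadd', hsmul', hmul', hΨr_norm, hmain⟩
end

section
/- Let (Ω, Σ, μ) be a finite measure space (μ(Ω) < ∞), let 1 ≤ r < ∞, let A be a normed algebra over ℂ, and let M > 0. Suppose that for each p ∈ [r,∞) there is a map Ψ_p : A → B(L^p(μ)) (bounded operators on the complex space L^p(μ)) that is linear and multiplicative, with ‖Ψ_p(a)‖ ≤ M‖a‖ for all a ∈ A, and that the family is consistent: Ψ_p(a)x = Ψ_q(a)x μ-almost everywhere whenever a ∈ A, p, q ∈ [r,∞), and x ∈ L^p(μ) ∩ L^q(μ). Then (noting that L^∞(μ) ⊆ L^p(μ) for every p since μ is finite) there exists a linear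 and multiplicative map Ψ_∞ : A → B(L^∞(μ)) such that ‖Ψ_∞(a)‖ ≤ M‖a‖ for all a ∈ A, and Ψ_∞(a)x = Ψ_p(a)x μ-almost everywhere for every a ∈ A, every p ∈ [r,∞), and every x ∈ L^∞(μ). -/
open MeasureTheory Filter Topology ENNReal


lemma aux_tendsto_rpow_one_div {c : ℝ≥0∞} (hc0 : c ≠ 0) (hct : c ≠ ∞) :
    Tendsto (fun n : ℕ => c ^ (1 / (n : ℝ))) atTop (𝓝 1) := by
  lift c to NNReal using hct
  have hc0' : c ≠ 0 := by simpa using hc0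
  have h2 : Tendsto (fun n : ℕ => c ^ (1 / (n : ℝ))) atTop (𝓝 (1 : NNReal)) := by
    rw [← NNReal.tendsto_coe]
    have hcont : ContinuousAt ((c : ℝ) ^ ·) (0 : ℝ) :=
      Real.continuousAt_const_rpow (by exact_mod_cast hc0')
    have := hcont.tendsto.comp tendsto_one_div_atTop_nhds_zero_nat
    simpa [Real.rpow_zero, NNReal.coe_rpow, Function.comp_def] using this
  have := ENNReal.tendsto_coe.2 h2
  simpa [ENNReal.coe_rpow_of_ne_zero hc0'] using this

lemma aux_essSup_le {Ω : Type*} [MeasurableSpace Ω] (μ : Measure Ω) [IsFiniteMeasure μ]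
    {f : Ω → ℂ} (hf : AEStronglyMeasurable f μ) (C : ℝ≥0∞) (n₀ : ℕ)
    (h : ∀ n : ℕ, n₀ ≤ n → eLpNorm f n μ ≤ C * μ Set.univ ^ (1 / (n : ℝ))) :
    eLpNormEssSup f μ ≤ C := by
  refine le_of_forall_gt_imp_ge_of_dense fun C' hC' => ?_
  by_cases hC't : C' = ∞
  · simp [hC't]
  rw [eLpNormEssSup]
  refine essSup_le_of_ae_le C' ?_
  by_contra hcon
  set S : Set Ω := { ω | C' ≤ (‖f ω‖₊ : ℝ≥0∞) } with hS
  have hSpos : μ S ≠ 0 := by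
    intro h0
    apply hcon
    have hsub : { ω | ¬ (‖f ω‖₊ : ℝ≥0∞) ≤ C' } ⊆ S := fun ω hω => (not_le.1 hω).le
    exact (measure_mono_null hsub h0)
  have hSfin : μ S ≠ ∞ := (measure_lt_top μ S).ne
  have hμfin : μ Set.univ ≠ ∞ := (measure_lt_top μ _).ne
  have hμpos : μ Set.univ ≠ 0 := fun h0 => hSpos (measure_mono_null (Set.subset_univ S) h0)
  have key : ∀ n : ℕ, max n₀ 1 ≤ n →
      C' * μ S ^ (1 / (n : ℝ)) ≤ C * μ Set.univ ^ (1 / (n : ℝ)) := by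
    intro n hn
    have hn1 : 1 ≤ n := le_trans (le_max_right _ _) hn
    have hn0 : ((n : ℝ≥0∞)) ≠ 0 := by exact_mod_cast Nat.one_le_iff_ne_zero.1 hn1
    have hnt : ((n : ℝ≥0∞)) ≠ ∞ := (ENNReal.natCast_lt_top n).ne
    have hnR : ((n : ℝ≥0∞)).toReal = (n : ℝ) := by simp
    have hnR0 : (n : ℝ) ≠ 0 := by exact_mod_cast Nat.one_le_iff_ne_zero.1 hn1
    have cheb := mul_meas_ge_le_pow_eLpNorm' μ hn0 hnt hf C'
    rw [hnR] at cheb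
    have cheb2 : (C' ^ (n : ℝ) * μ S) ^ (1 / (n : ℝ)) ≤ eLpNorm f n μ := by
      have := ENNReal.rpow_le_rpow cheb (by positivity : (0:ℝ) ≤ 1 / (n : ℝ))
      rwa [← ENNReal.rpow_mul (eLpNorm f n μ),
        show ((n : ℝ) * (1 / (n : ℝ))) = 1 by field_simp, ENNReal.rpow_one] at this
    have lhs_eq : (C' ^ (n : ℝ) * μ S) ^ (1 / (n : ℝ)) = C' * μ S ^ (1 / (n : ℝ)) := by
      rw [ENNReal.mul_rpow_of_nonneg _ _ (by positivity), ← ENNReal.rpow_mul,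
        show ((n : ℝ) * (1 / (n : ℝ))) = 1 by field_simp, ENNReal.rpow_one]
    calc C' * μ S ^ (1 / (n : ℝ)) = (C' ^ (n : ℝ) * μ S) ^ (1 / (n : ℝ)) := lhs_eq.symm
      _ ≤ eLpNorm f n μ := cheb2
      _ ≤ C * μ Set.univ ^ (1 / (n : ℝ)) := h n (le_trans (le_max_left _ _) hn)
  have t1 : Tendsto (fun n : ℕ => C' * μ S ^ (1 / (n : ℝ))) atTop (𝓝 C') := by
    have := ENNReal.Tendsto.const_mul (aux_tendsto_rpow_one_div hSpos hSfin)
      (Or.inl one_ne_zero) (a := C')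
    simpa using this
  have t2 : Tendsto (fun n : ℕ => C * μ Set.univ ^ (1 / (n : ℝ))) atTop (𝓝 C) := by
    have := ENNReal.Tendsto.const_mul (aux_tendsto_rpow_one_div hμpos hμfin)
      (Or.inl one_ne_zero) (a := C)
    simpa using this
  have hle : C' ≤ C :=
    le_of_tendsto_of_tendsto t1 t2 (eventually_atTop.2 ⟨max n₀ 1, key⟩)
  exact absurd hle (not_le.2 hC')

/-- Let `(Ω, Σ, μ)` be a finite measure space, `1 ≤ r < ∞`, `A` a normed
algebra over `ℂ` and `M > 0`.  If for each `p ∈ [r,∞)` there is a linear multiplicative map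
`Ψ_p : A → B(L^p(μ))` with `‖Ψ_p(a)‖ ≤ M‖a‖`, and the family is consistent, then (noting that
`L^∞(μ) ⊆ L^p(μ)` for each `p` since `μ` is finite) there is a linear multiplicative map
`Ψ_∞ : A → B(L^∞(μ))` with `‖Ψ_∞(a)‖ ≤ M‖a‖` and `Ψ_∞(a)x = Ψ_p(a)x` a.e. for all `a`,
all `p ∈ [r,∞)` and all `x ∈ L^∞(μ)`. -/
theorem stmt14 {Ω : Type*} [MeasurableSpace Ω] (μ : Measure Ω) [IsFiniteMeasure μ]
    {A : Type*} [NormedRing A] [NormedAlgebra ℂ A]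
    (r : ℝ≥0∞) (hr : 1 ≤ r) (hr' : r < ∞) (M : ℝ) (hM : 0 < M)
    (Ψ : ∀ (p : ℝ≥0∞) [Fact (1 ≤ p)], r ≤ p → p < ∞ → A → Lp ℂ p μ →L[ℂ] Lp ℂ p μ)
    (hadd : ∀ (p : ℝ≥0∞) [Fact (1 ≤ p)] (hp : r ≤ p) (hps : p < ∞) (a b : A),
      Ψ p hp hps (a + b) = Ψ p hp hps a + Ψ p hp hps b)
    (hsmul : ∀ (p : ℝ≥0∞) [Fact (1 ≤ p)] (hp : r ≤ p) (hps : p < ∞) (c : ℂ) (a : A),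
      Ψ p hp hps (c • a) = c • Ψ p hp hps a)
    (hmul : ∀ (p : ℝ≥0∞) [Fact (1 ≤ p)] (hp : r ≤ p) (hps : p < ∞) (a b : A),
      Ψ p hp hps (a * b) = (Ψ p hp hps a).comp (Ψ p hp hps b))
    (hbound : ∀ (p : ℝ≥0∞) [Fact (1 ≤ p)] (hp : r ≤ p) (hps : p < ∞) (a : A),
      ‖Ψ p hp hps a‖ ≤ M * ‖a‖)
    (hcons : ∀ (p q : ℝ≥0∞) [Fact (1 ≤ p)] [Fact (1 ≤ q)]
        (hp : r ≤ p) (hps : p < ∞) (hq : r ≤ q) (hqs : q < ∞) (a : A)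
        (x : Lp ℂ p μ) (y : Lp ℂ q μ), (x : Ω → ℂ) =ᵐ[μ] (y : Ω → ℂ) →
        (Ψ p hp hps a x : Ω → ℂ) =ᵐ[μ] (Ψ q hq hqs a y : Ω → ℂ)) :
    ∃ Ψi : A → Lp ℂ ∞ μ →L[ℂ] Lp ℂ ∞ μ,
      (∀ a b : A, Ψi (a + b) = Ψi a + Ψi b) ∧
      (∀ (c : ℂ) (a : A), Ψi (c • a) = c • Ψi a) ∧
      (∀ a b : A, Ψi (a * b) = (Ψi a).comp (Ψi b)) ∧
      (∀ a : A, ‖Ψi a‖ ≤ M * ‖a‖) ∧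
      (∀ (a : A) (p : ℝ≥0∞) [Fact (1 ≤ p)] (hp : r ≤ p) (hps : p < ∞)
        (x : Lp ℂ ∞ μ) (y : Lp ℂ p μ), (x : Ω → ℂ) =ᵐ[μ] (y : Ω → ℂ) →
          (Ψi a x : Ω → ℂ) =ᵐ[μ] (Ψ p hp hps a y : Ω → ℂ)) := by
  haveI hrF : Fact (1 ≤ r) := ⟨hr⟩
  have hι : ∀ (p : ℝ≥0∞) (x : Lp ℂ ∞ μ), MemLp (x : Ω → ℂ) p μ :=
    fun p x => (Lp.memLp x).mono_exponent le_top
  let ι : ∀ (p : ℝ≥0∞), Lp ℂ ∞ μ → Lp ℂ p μ := fun p x => (hι p x).toLp _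
  have hιae : ∀ (p : ℝ≥0∞) (x : Lp ℂ ∞ μ), (ι p x : Ω → ℂ) =ᵐ[μ] (x : Ω → ℂ) :=
    fun p x => (hι p x).coeFn_toLp
  let Y : A → Lp ℂ ∞ μ → Lp ℂ r μ := fun a x => Ψ r le_rfl hr' a (ι r x)
  have hYp : ∀ (a : A) (p : ℝ≥0∞) [Fact (1 ≤ p)] (hp : r ≤ p) (hps : p < ∞) (y : Lp ℂ p μ)
      (x : Lp ℂ ∞ μ), (x : Ω → ℂ) =ᵐ[μ] (y : Ω → ℂ) →
      (Y a x : Ω → ℂ) =ᵐ[μ] (Ψ p hp hps a y : Ω → ℂ) :=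
    fun a p _ hp hps y x hxy =>
      hcons r p le_rfl hr' hp hps a (ι r x) y ((hιae r x).trans hxy)
  have hMa : ∀ a : A, (0:ℝ) ≤ M * ‖a‖ := fun a => mul_nonneg hM.le (norm_nonneg _)
  -- the key bound
  have hYbound : ∀ (a : A) (x : Lp ℂ ∞ μ),
      eLpNormEssSup (Y a x : Ω → ℂ) μ ≤ ENNReal.ofReal (M * ‖a‖) * eLpNorm (x : Ω → ℂ) ∞ μ := by
    intro a x
    obtain ⟨n₀, hn₀⟩ := ENNReal.exists_nat_gt hr'.ne
    refine aux_essSup_le μ (Lp.aestronglyMeasurable _) _ n₀ ?_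
    intro n hn
    have hrn : r ≤ (n : ℝ≥0∞) := le_trans hn₀.le (by exact_mod_cast hn)
    have h1n : (1 : ℝ≥0∞) ≤ (n : ℝ≥0∞) := le_trans hr hrn
    haveI : Fact ((1 : ℝ≥0∞) ≤ (n : ℝ≥0∞)) := ⟨h1n⟩
    have hns : ((n : ℝ≥0∞)) < ∞ := ENNReal.natCast_lt_top n
    have heq : eLpNorm (Y a x : Ω → ℂ) n μ
        = eLpNorm ((Ψ (n : ℝ≥0∞) hrn hns a (ι n x)) : Ω → ℂ) n μ :=
      eLpNorm_congr_ae (hYp a n hrn hns (ι n x) x (hιae n x).symm)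
    rw [heq]
    calc eLpNorm ((Ψ (n : ℝ≥0∞) hrn hns a (ι n x)) : Ω → ℂ) n μ
        = ENNReal.ofReal ‖Ψ (n : ℝ≥0∞) hrn hns a (ι n x)‖ := by
          rw [Lp.norm_def, ENNReal.ofReal_toReal (Lp.eLpNorm_ne_top _)]
      _ ≤ ENNReal.ofReal (M * ‖a‖ * ‖ι n x‖) := by
          refine ENNReal.ofReal_le_ofReal ?_
          calc ‖Ψ (n : ℝ≥0∞) hrn hns a (ι n x)‖
              ≤ ‖Ψ (n : ℝ≥0∞) hrn hns a‖ * ‖ι n x‖ := ContinuousLinearMap.le_opNorm _ _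
            _ ≤ M * ‖a‖ * ‖ι n x‖ :=
                mul_le_mul_of_nonneg_right (hbound (n : ℝ≥0∞) hrn hns a) (norm_nonneg _)
      _ = ENNReal.ofReal (M * ‖a‖) * eLpNorm (ι n x : Ω → ℂ) n μ := by
          rw [ENNReal.ofReal_mul (hMa a), Lp.norm_def,
            ENNReal.ofReal_toReal (Lp.eLpNorm_ne_top _)]
      _ = ENNReal.ofReal (M * ‖a‖) * eLpNorm (x : Ω → ℂ) n μ := by
          rw [eLpNorm_congr_ae (hιae n x)]
      _ ≤ ENNReal.ofReal (M * ‖a‖) * (eLpNorm (x : Ω → ℂ) ∞ μ * μ Set.univ ^ (1 / (n : ℝ))) := by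
          gcongr
          have h := eLpNorm_le_eLpNorm_mul_rpow_measure_univ (le_top : (n : ℝ≥0∞) ≤ ∞)
            (Lp.aestronglyMeasurable x)
          simpa using h
      _ = ENNReal.ofReal (M * ‖a‖) * eLpNorm (x : Ω → ℂ) ∞ μ * μ Set.univ ^ (1 / (n : ℝ)) := by
          ring
  -- membership in L^∞
  have hYmem : ∀ (a : A) (x : Lp ℂ ∞ μ), MemLp (Y a x : Ω → ℂ) ∞ μ := by
    intro a x
    refine ⟨Lp.aestronglyMeasurable _, ?_⟩
    rw [eLpNorm_exponent_top]
    exact lt_of_le_of_lt (hYbound a x)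
      (ENNReal.mul_lt_top ENNReal.ofReal_lt_top (Lp.eLpNorm_lt_top x))
  let T : A → Lp ℂ ∞ μ → Lp ℂ ∞ μ := fun a x => (hYmem a x).toLp _
  have hTae : ∀ (a : A) (x : Lp ℂ ∞ μ), (T a x : Ω → ℂ) =ᵐ[μ] (Y a x : Ω → ℂ) :=
    fun a x => (hYmem a x).coeFn_toLp
  -- ι commutes with T on the nose
  have hιT : ∀ (a : A) (x : Lp ℂ ∞ μ), ι r (T a x) = Y a x := by
    intro a x
    exact Lp.ext ((hιae r (T a x)).trans (hTae a x))
  -- norm bound for T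
  have hTnorm : ∀ (a : A) (x : Lp ℂ ∞ μ), ‖T a x‖ ≤ M * ‖a‖ * ‖x‖ := by
    intro a x
    rw [Lp.norm_def]
    have h1 : eLpNorm (T a x : Ω → ℂ) ∞ μ = eLpNormEssSup (Y a x : Ω → ℂ) μ := by
      rw [eLpNorm_congr_ae (hTae a x), eLpNorm_exponent_top]
    rw [h1]
    have h3 : (ENNReal.ofReal (M * ‖a‖) * eLpNorm (x : Ω → ℂ) ∞ μ).toReal = M * ‖a‖ * ‖x‖ := by
      rw [ENNReal.toReal_mul, ENNReal.toReal_ofReal (hMa a), ← Lp.norm_def]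
    calc (eLpNormEssSup (Y a x : Ω → ℂ) μ).toReal
        ≤ (ENNReal.ofReal (M * ‖a‖) * eLpNorm (x : Ω → ℂ) ∞ μ).toReal :=
          ENNReal.toReal_mono
            (ENNReal.mul_ne_top ENNReal.ofReal_ne_top (Lp.eLpNorm_ne_top x)) (hYbound a x)
      _ = M * ‖a‖ * ‖x‖ := h3
  -- linearity of T in x
  have hTaddx : ∀ (a : A) (x y : Lp ℂ ∞ μ), T a (x + y) = T a x + T a y := by
    intro a x y
    apply Lp.ext
    have e1 : ι r (x + y) = ι r x + ι r y := by
      apply Lp.ext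
      filter_upwards [hιae r (x + y), Lp.coeFn_add x y, Lp.coeFn_add (ι r x) (ι r y),
        hιae r x, hιae r y] with ω h1 h2 h3 h4 h5
      rw [h1, h2, h3, Pi.add_apply, Pi.add_apply, h4, h5]
    have e2 : Y a (x + y) = Y a x + Y a y := by
      show Ψ r le_rfl hr' a (ι r (x + y)) = _
      rw [e1, map_add]
    filter_upwards [hTae a (x + y), Lp.coeFn_add (Y a x) (Y a y),
      Lp.coeFn_add (T a x) (T a y), hTae a x, hTae a y] with ω h1 h2 h3 h4 h5
    rw [h1, e2, h2, h3, Pi.add_apply, Pi.add_apply, h4, h5]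
  have hTsmulx : ∀ (a : A) (c : ℂ) (x : Lp ℂ ∞ μ), T a (c • x) = c • T a x := by
    intro a c x
    apply Lp.ext
    have e1 : ι r (c • x) = c • ι r x := by
      apply Lp.ext
      filter_upwards [hιae r (c • x), Lp.coeFn_smul c x, Lp.coeFn_smul c (ι r x),
        hιae r x] with ω h1 h2 h3 h4
      rw [h1, h2, h3, Pi.smul_apply, Pi.smul_apply, h4]
    have e2 : Y a (c • x) = c • Y a x := by
      show Ψ r le_rfl hr' a (ι r (c • x)) = _
      rw [e1, ContinuousLinearMap.map_smul]
    filter_upwards [hTae a (c • x), Lp.coeFn_smul c (Y a x),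
      Lp.coeFn_smul c (T a x), hTae a x] with ω h1 h2 h3 h4
    rw [h1, e2, h2, h3, Pi.smul_apply, Pi.smul_apply, h4]
  -- package as continuous linear maps
  let L : A → Lp ℂ ∞ μ →ₗ[ℂ] Lp ℂ ∞ μ := fun a =>
    { toFun := T a
      map_add' := hTaddx a
      map_smul' := hTsmulx a }
  let Ψi : A → Lp ℂ ∞ μ →L[ℂ] Lp ℂ ∞ μ := fun a =>
    (L a).mkContinuous (M * ‖a‖) (hTnorm a)
  have hΨiT : ∀ (a : A) (x : Lp ℂ ∞ μ), Ψi a x = T a x := fun a x => rfl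
  refine ⟨Ψi, ?_, ?_, ?_, ?_, ?_⟩
  · -- additivity in a
    intro a b
    refine ContinuousLinearMap.ext fun x => Lp.ext ?_
    have e2 : Y (a + b) x = Y a x + Y b x := by
      show Ψ r le_rfl hr' (a + b) (ι r x) = _
      rw [hadd r le_rfl hr' a b]
      rfl
    simp only [hΨiT, ContinuousLinearMap.add_apply]
    filter_upwards [hTae (a + b) x, Lp.coeFn_add (Y a x) (Y b x),
      Lp.coeFn_add (T a x) (T b x), hTae a x, hTae b x] with ω h1 h2 h3 h4 h5
    rw [h1, e2, h2, h3, Pi.add_apply, Pi.add_apply, h4, h5]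
  · -- scalar multiplication in a
    intro c a
    refine ContinuousLinearMap.ext fun x => Lp.ext ?_
    have e2 : Y (c • a) x = c • Y a x := by
      show Ψ r le_rfl hr' (c • a) (ι r x) = _
      rw [hsmul r le_rfl hr' c a]
      rfl
    simp only [hΨiT, ContinuousLinearMap.smul_apply]
    filter_upwards [hTae (c • a) x, Lp.coeFn_smul c (Y a x),
      Lp.coeFn_smul c (T a x), hTae a x] with ω h1 h2 h3 h4
    rw [h1, e2, h2, h3, Pi.smul_apply, Pi.smul_apply, h4]
  · -- multiplicativity
    intro a b
    refine ContinuousLinearMap.ext fun x => Lp.ext ?_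
    have e2 : Y (a * b) x = Ψ r le_rfl hr' a (Y b x) := by
      show Ψ r le_rfl hr' (a * b) (ι r x) = _
      rw [hmul r le_rfl hr' a b]
      rfl
    have e3 : Y a (T b x) = Ψ r le_rfl hr' a (Y b x) := by
      show Ψ r le_rfl hr' a (ι r (T b x)) = _
      rw [hιT b x]
    simp only [hΨiT, ContinuousLinearMap.comp_apply]
    filter_upwards [hTae (a * b) x, hTae a (T b x)] with ω h1 h2
    rw [h1, e2, h2, e3]
  · -- norm bound
    intro a
    exact LinearMap.mkContinuous_norm_le (L a) (hMa a) (hTnorm a)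
  · -- consistency
    intro a p _ hp hps x y hxy
    exact (hTae a x).trans (hYp a p hp hps y x hxy)
end

section
/- Let σ₁ = {0} ∪ {1/n : n = 1, 2, 3, ...}, a compact subset of ℝ, and let T be the bounded operator on ℓ² (square-summable complex sequences indexed by n = 0, 1, 2, ...) defined by (Tx)_0 = 0 and (Tx)_n = x_n/n for n ≥ 1. For every f : ℝ → ℂ of bounded variation on σ₁, the limit ℓ(f) := lim_{n→∞} f(1/n) exists; define operators Φ₁(f) and Φ₂(f) on ℓ² by (Φ₁(f)x)_0 = f(0)x_0, (Φ₂(f)x)_0 = ℓ(f)x_0, and (Φ₁(f)x)_n = (Φ₂(f)x)_n = f(1/n)x_n for n ≥ 1. Then for i = 1, 2: Φ_i(f) is a bounded operator with ‖Φ_i(f)‖ ≤ sup_{t∈σ₁}|f(t)| + var_{σ₁}(f); Φ_i(f+g) = Φ_i(f) + Φ_i(g) and Φ_i(f·g) = Φ_i(f)∘Φ_i(g) for all f, g of bounded variation on σ₁; Φ_i(p) = p(T) for every polynomial p with complex coefficients (p regarded as the function t ↦ p(t) on ℝ); and Φ₁ ≠ Φ₂ (they differ at the indicator function of {0}). -/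
open MeasureTheory Filter Topology

open ENNReal NNReal Classical

/-- The set `σ₁ = {0} ∪ {1/n : n ≥ 1}`. -/
noncomputable def sigma1 : Set ℝ := {0} ∪ {t : ℝ | ∃ n : ℕ, 1 ≤ n ∧ t = 1 / n}

local notation "H" => lp (fun _ : ℕ => ℂ) 2

lemma memℓp2_mul {m : ℕ → ℂ} {C : ℝ} (hm : ∀ n, ‖m n‖ ≤ C) (x : H) :
    Memℓp (fun n => m n * x n) 2 := by
  have hC : (0:ℝ) ≤ C := le_trans (norm_nonneg _) (hm 0)
  apply memℓp_gen
  have h2 : (2 : ℝ≥0∞).toReal = 2 := by norm_num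
  have hx : Summable fun n => ‖x n‖ ^ ((2:ℝ≥0∞).toReal) :=
    (memℓp_gen_iff (by norm_num)).1 (lp.memℓp x)
  refine Summable.of_nonneg_of_le (fun n => by positivity) (fun n => ?_)
    (hx.mul_left (C ^ ((2:ℝ≥0∞).toReal)))
  rw [h2] at *
  have : ‖m n * x n‖ ^ (2:ℝ) = ‖m n‖ ^ (2:ℝ) * ‖x n‖ ^ (2:ℝ) := by
    rw [norm_mul, Real.mul_rpow (norm_nonneg _) (norm_nonneg _)]
  rw [this]
  exact mul_le_mul_of_nonneg_right
    (Real.rpow_le_rpow (norm_nonneg _) (hm n) (by norm_num))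
    (Real.rpow_nonneg (norm_nonneg _) _)

noncomputable def diagAux (m : ℕ → ℂ) (h : ∃ C, ∀ n, ‖m n‖ ≤ C) : H →ₗ[ℂ] H where
  toFun x := ⟨fun n => m n * x n, memℓp2_mul h.choose_spec x⟩
  map_add' x y := by
    apply lp.ext; funext n
    simp only [lp.coeFn_add, Pi.add_apply]
    show m n * (x + y) n = m n * x n + m n * y n
    rw [lp.coeFn_add]; simp [mul_add]
  map_smul' c x := by
    apply lp.ext; funext n
    show m n * (c • x) n = (c • _ : H) n
    rw [lp.coeFn_smul, lp.coeFn_smul]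
    simp [Pi.smul_apply, smul_eq_mul]; ring

lemma diagAux_apply (m : ℕ → ℂ) (h : ∃ C, ∀ n, ‖m n‖ ≤ C) (x : H) (n : ℕ) :
    (diagAux m h x) n = m n * x n := rfl

lemma diagAux_norm_le {m : ℕ → ℂ} {C : ℝ} (hC : 0 ≤ C) (hm : ∀ n, ‖m n‖ ≤ C)
    (h : ∃ C, ∀ n, ‖m n‖ ≤ C) (x : H) : ‖diagAux m h x‖ ≤ C * ‖x‖ := by
  refine lp.norm_le_of_forall_sum_le (p := 2) (by norm_num)
    (mul_nonneg hC (norm_nonneg _)) (fun s => ?_)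
  have h2 : (2 : ℝ≥0∞).toReal = 2 := by norm_num
  rw [h2]
  calc ∑ i ∈ s, ‖(diagAux m h x) i‖ ^ (2:ℝ)
      = ∑ i ∈ s, ‖m i‖ ^ (2:ℝ) * ‖x i‖ ^ (2:ℝ) := by
        refine Finset.sum_congr rfl fun i _ => ?_
        rw [diagAux_apply, norm_mul, Real.mul_rpow (norm_nonneg _) (norm_nonneg _)]
    _ ≤ ∑ i ∈ s, C ^ (2:ℝ) * ‖x i‖ ^ (2:ℝ) :=
        Finset.sum_le_sum fun i _ => mul_le_mul_of_nonneg_right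
          (Real.rpow_le_rpow (norm_nonneg _) (hm i) (by norm_num))
          (Real.rpow_nonneg (norm_nonneg _) _)
    _ = C ^ (2:ℝ) * ∑ i ∈ s, ‖x i‖ ^ (2:ℝ) := by rw [Finset.mul_sum]
    _ ≤ C ^ (2:ℝ) * ‖x‖ ^ (2:ℝ) := mul_le_mul_of_nonneg_left
          (by simpa [h2] using lp.sum_rpow_le_norm_rpow (p := 2) (by norm_num) x s)
          (Real.rpow_nonneg hC _)
    _ = (C * ‖x‖) ^ (2:ℝ) := (Real.mul_rpow hC (norm_nonneg _)).symm

noncomputable def diag (m : ℕ → ℂ) : H →L[ℂ] H :=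
  if h : ∃ C, ∀ n, ‖m n‖ ≤ C then
    (diagAux m h).mkContinuous (max h.choose 0)
      (fun x => diagAux_norm_le (le_max_right _ _)
        (fun n => le_trans (h.choose_spec n) (le_max_left _ _)) h x)
  else 0

lemma diag_apply {m : ℕ → ℂ} (h : ∃ C, ∀ n, ‖m n‖ ≤ C) (x : H) (n : ℕ) :
    (diag m x) n = m n * x n := by
  rw [diag, dif_pos h]; rfl

lemma diag_norm_le {m : ℕ → ℂ} {C : ℝ} (hC : 0 ≤ C) (hm : ∀ n, ‖m n‖ ≤ C) :
    ‖diag m‖ ≤ C := by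
  have h : ∃ C, ∀ n, ‖m n‖ ≤ C := ⟨C, hm⟩
  rw [diag, dif_pos h]
  exact ContinuousLinearMap.opNorm_le_bound _ hC
    (fun x => diagAux_norm_le hC hm h x)

lemma zero_mem_sigma1 : (0:ℝ) ∈ sigma1 := Or.inl rfl

lemma inv_mem_sigma1 {n : ℕ} (hn : 1 ≤ n) : (1 / (n:ℝ)) ∈ sigma1 := Or.inr ⟨n, hn, rfl⟩

lemma norm_le_sSup_bv {f : ℝ → ℂ} (hf : BoundedVariationOn f sigma1) {t : ℝ} (ht : t ∈ sigma1) :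
    ‖f t‖ ≤ sSup ((fun t => ‖f t‖) '' sigma1) := by
  have hbdd : BddAbove ((fun t => ‖f t‖) '' sigma1) := by
    refine ⟨‖f 0‖ + (eVariationOn f sigma1).toReal, ?_⟩
    rintro y ⟨u, hu, rfl⟩
    have h1 : ‖f u - f 0‖ = (edist (f u) (f 0)).toReal := by
      rw [edist_dist, ENNReal.toReal_ofReal dist_nonneg, dist_eq_norm]
    have h2 : (edist (f u) (f 0)).toReal ≤ (eVariationOn f sigma1).toReal :=
      ENNReal.toReal_mono hf (eVariationOn.edist_le f hu zero_mem_sigma1)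
    calc ‖f u‖ = ‖f 0 + (f u - f 0)‖ := by ring_nf
      _ ≤ ‖f 0‖ + ‖f u - f 0‖ := norm_add_le _ _
      _ ≤ ‖f 0‖ + (eVariationOn f sigma1).toReal := by rw [h1]; linarith
  exact le_csSup hbdd ⟨t, ht, rfl⟩

lemma bv_dist_sum_le {f : ℝ → ℂ} (hf : BoundedVariationOn f sigma1) (N : ℕ) :
    ∑ k ∈ Finset.range N, dist (f (1/((k:ℝ)+1))) (f (1/((k:ℝ)+2)))
      ≤ (eVariationOn f sigma1).toReal := by
  set u : ℕ → ℝ := fun i => 1 / ((N + 1 - min i N : ℕ) : ℝ) with hu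
  have hmin : ∀ i, 1 ≤ N + 1 - min i N := fun i => by
    have := min_le_right i N; omega
  have humono : Monotone u := by
    intro i j hij
    have h1 : min i N ≤ min j N := min_le_min hij le_rfl
    have h2 : N + 1 - min j N ≤ N + 1 - min i N := by omega
    have h3 : (0:ℝ) < ((N + 1 - min j N : ℕ) : ℝ) := by
      exact_mod_cast Nat.lt_of_lt_of_le Nat.zero_lt_one (hmin j)
    exact one_div_le_one_div_of_le h3 (by exact_mod_cast h2)
  have hus : ∀ i, u i ∈ sigma1 := fun i => inv_mem_sigma1 (hmin i)
  have hkey : ∀ k ∈ Finset.range N,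
      edist (f (u ((N - 1 - k) + 1))) (f (u (N - 1 - k)))
        = edist (f (1/((k:ℝ)+1))) (f (1/((k:ℝ)+2))) := by
    intro k hk
    rw [Finset.mem_range] at hk
    have e1 : N + 1 - min ((N - 1 - k) + 1) N = k + 1 := by
      have : min ((N - 1 - k) + 1) N = (N - 1 - k) + 1 := by omega
      omega
    have e2 : N + 1 - min (N - 1 - k) N = k + 2 := by
      have : min (N - 1 - k) N = N - 1 - k := by omega
      omega
    rw [hu]
    simp only [e1, e2]
    congr 2 <;> push_cast <;> ring
  have hsum : ∑ k ∈ Finset.range N, edist (f (1/((k:ℝ)+1))) (f (1/((k:ℝ)+2)))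
      ≤ eVariationOn f sigma1 := by
    calc ∑ k ∈ Finset.range N, edist (f (1/((k:ℝ)+1))) (f (1/((k:ℝ)+2)))
        = ∑ k ∈ Finset.range N, edist (f (u ((N - 1 - k) + 1))) (f (u (N - 1 - k))) :=
          (Finset.sum_congr rfl hkey).symm
      _ = ∑ i ∈ Finset.range N, edist (f (u (i + 1))) (f (u i)) :=
          Finset.sum_range_reflect (fun i => edist (f (u (i + 1))) (f (u i))) N
      _ ≤ eVariationOn f sigma1 := eVariationOn.sum_le (f := f) (n := N) humono hus
  have hne : ∀ k ∈ Finset.range N,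
      edist (f (1/((k:ℝ)+1))) (f (1/((k:ℝ)+2))) ≠ ⊤ := fun k _ => edist_ne_top _ _
  calc ∑ k ∈ Finset.range N, dist (f (1/((k:ℝ)+1))) (f (1/((k:ℝ)+2)))
      = (∑ k ∈ Finset.range N, edist (f (1/((k:ℝ)+1))) (f (1/((k:ℝ)+2)))).toReal := by
        rw [ENNReal.toReal_sum hne]
        exact Finset.sum_congr rfl fun k _ => dist_edist _ _
    _ ≤ (eVariationOn f sigma1).toReal := ENNReal.toReal_mono hf hsum

lemma bv_tendsto {f : ℝ → ℂ} (hf : BoundedVariationOn f sigma1) :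
    ∃ l : ℂ, Tendsto (fun n : ℕ => f (1 / ((n : ℝ) + 1))) atTop (𝓝 l) := by
  set a : ℕ → ℂ := fun n => f (1 / ((n : ℝ) + 1)) with ha
  have hsum : Summable (fun k : ℕ => dist (a k) (a (k+1))) := by
    apply summable_of_sum_range_le (c := (eVariationOn f sigma1).toReal)
      (fun k => dist_nonneg)
    intro N
    have hN := bv_dist_sum_le hf N
    refine le_trans (le_of_eq (Finset.sum_congr rfl fun k _ => ?_)) hN
    have : ((k+1:ℕ):ℝ) + 1 = (k:ℝ) + 2 := by push_cast; ring
    simp only [ha]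
    rw [this]
  have hc : CauchySeq a := cauchySeq_of_summable_dist hsum
  exact cauchySeq_tendsto_of_complete hc

noncomputable def limf (f : ℝ → ℂ) : ℂ := limUnder atTop (fun n : ℕ => f (1 / ((n : ℝ) + 1)))

lemma limf_eq {f : ℝ → ℂ} {l : ℂ}
    (h : Tendsto (fun n : ℕ => f (1 / ((n : ℝ) + 1))) atTop (𝓝 l)) : limf f = l :=
  h.limUnder_eq

noncomputable def mult1 (f : ℝ → ℂ) : ℕ → ℂ := fun n => if n = 0 then f 0 else f (1 / (n : ℝ))

noncomputable def mult2 (f : ℝ → ℂ) : ℕ → ℂ := fun n => if n = 0 then limf f else f (1 / (n : ℝ))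

noncomputable def tmul : ℕ → ℂ := fun n => if n = 0 then 0 else 1 / (n : ℂ)

lemma tmul_bdd : ∀ n, ‖tmul n‖ ≤ 1 := by
  intro n
  rcases Nat.eq_zero_or_pos n with h | h
  · simp [tmul, h]
  · have hn : n ≠ 0 := h.ne'
    simp only [tmul, if_neg hn]
    rw [norm_div, norm_one]
    rw [Complex.norm_natCast]
    rw [div_le_one (by exact_mod_cast h)]
    exact_mod_cast h

lemma mult1_bdd {f : ℝ → ℂ} (hf : BoundedVariationOn f sigma1) :
    ∀ n, ‖mult1 f n‖ ≤ sSup ((fun t => ‖f t‖) '' sigma1) := by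
  intro n
  rcases Nat.eq_zero_or_pos n with h | h
  · simp only [mult1, h, if_pos rfl]
    exact norm_le_sSup_bv hf zero_mem_sigma1
  · simp only [mult1, if_neg h.ne']
    exact norm_le_sSup_bv hf (inv_mem_sigma1 h)

lemma mult2_bdd {f : ℝ → ℂ} (hf : BoundedVariationOn f sigma1) :
    ∀ n, ‖mult2 f n‖ ≤ sSup ((fun t => ‖f t‖) '' sigma1) := by
  intro n
  rcases Nat.eq_zero_or_pos n with h | h
  · simp only [mult2, h, if_pos rfl]
    obtain ⟨l, hl⟩ := bv_tendsto hf
    rw [limf_eq hl]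
    refine le_of_tendsto hl.norm (Eventually.of_forall fun n => ?_)
    have : (1 / ((n:ℝ) + 1)) = 1 / (((n+1:ℕ)):ℝ) := by push_cast; ring
    rw [this]
    exact norm_le_sSup_bv hf (inv_mem_sigma1 (Nat.succ_le_succ (Nat.zero_le n)))
  · simp only [mult2, if_neg h.ne']
    exact norm_le_sSup_bv hf (inv_mem_sigma1 h)

lemma sSup_nonneg_bv {f : ℝ → ℂ} (hf : BoundedVariationOn f sigma1) :
    0 ≤ sSup ((fun t => ‖f t‖) '' sigma1) :=
  le_trans (norm_nonneg (f 0)) (norm_le_sSup_bv hf zero_mem_sigma1)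

lemma sSup_le_bvNorm {f : ℝ → ℂ} :
    sSup ((fun t => ‖f t‖) '' sigma1) ≤ bvNorm sigma1 f :=
  le_add_of_nonneg_right ENNReal.toReal_nonneg

lemma T_apply (x : H) (n : ℕ) : (diag tmul x) n = tmul n * x n :=
  diag_apply ⟨1, tmul_bdd⟩ x n

lemma aeval_T_apply (p : Polynomial ℂ) :
    ∀ (x : H) (n : ℕ), ((Polynomial.aeval (diag tmul) p) x) n = p.eval (tmul n) * x n := by
  induction p using Polynomial.induction_on with
  | C a =>
    intro x n
    rw [Polynomial.aeval_C, Polynomial.eval_C]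
    rw [Algebra.algebraMap_eq_smul_one]
    rw [ContinuousLinearMap.smul_apply, ContinuousLinearMap.one_apply]
    rw [lp.coeFn_smul]
    simp [smul_eq_mul]
  | add p q hp hq =>
    intro x n
    rw [map_add, ContinuousLinearMap.add_apply, lp.coeFn_add, Pi.add_apply,
      Polynomial.eval_add, hp, hq]
    ring
  | monomial k a hk =>
    intro x n
    have hrw : Polynomial.C a * Polynomial.X ^ (k + 1)
        = (Polynomial.C a * Polynomial.X ^ k) * Polynomial.X := by ring
    rw [hrw, map_mul, Polynomial.aeval_X, ContinuousLinearMap.mul_apply,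
      hk (diag tmul x) n, T_apply]
    simp only [Polynomial.eval_mul, Polynomial.eval_C, Polynomial.eval_pow, Polynomial.eval_X]
    ring

lemma mult1_poly (p : Polynomial ℂ) (n : ℕ) :
    mult1 (fun t : ℝ => p.eval (t : ℂ)) n = p.eval (tmul n) := by
  rcases Nat.eq_zero_or_pos n with h | h
  · simp [mult1, tmul, h]
  · simp only [mult1, tmul, if_neg h.ne']
    congr 1
    push_cast
    ring

lemma poly_tendsto (p : Polynomial ℂ) :
    Tendsto (fun n : ℕ => (fun t : ℝ => p.eval (t : ℂ)) (1 / ((n:ℝ)+1))) atTop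
      (𝓝 (p.eval 0)) := by
  have h1 : Tendsto (fun n : ℕ => 1 / ((n:ℝ)+1)) atTop (𝓝 0) :=
    tendsto_one_div_add_atTop_nhds_zero_nat
  have h2 : Tendsto (fun n : ℕ => ((1 / ((n:ℝ)+1) : ℝ) : ℂ)) atTop (𝓝 ((0:ℝ):ℂ)) :=
    (Complex.continuous_ofReal.tendsto 0).comp h1
  simpa [Function.comp_def] using (p.continuous.tendsto ((0:ℝ):ℂ)).comp h2

lemma mult2_poly (p : Polynomial ℂ) (n : ℕ) :
    mult2 (fun t : ℝ => p.eval (t : ℂ)) n = p.eval (tmul n) := by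
  rcases Nat.eq_zero_or_pos n with h | h
  · simp only [mult2, h, if_pos rfl, tmul]
    rw [limf_eq (poly_tendsto p)]
    simp
  · simp only [mult2, tmul, if_neg h.ne']
    congr 1
    push_cast
    ring

lemma poly_mult_bdd (p : Polynomial ℂ) : ∃ C : ℝ, ∀ z : ℂ, ‖z‖ ≤ 1 → ‖p.eval z‖ ≤ C := by
  obtain ⟨C, hC⟩ := (isCompact_closedBall (0:ℂ) 1).exists_bound_of_continuousOn
    p.continuous.continuousOn
  exact ⟨C, fun z hz => hC z (Metric.mem_closedBall.2 (by simpa [dist_eq_norm] using hz))⟩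

lemma mult1_add (f g : ℝ → ℂ) : mult1 (f + g) = fun n => mult1 f n + mult1 g n :=
  funext fun n => by by_cases h : n = 0 <;> simp [mult1, h]

lemma mult1_mul (f g : ℝ → ℂ) : mult1 (f * g) = fun n => mult1 f n * mult1 g n :=
  funext fun n => by by_cases h : n = 0 <;> simp [mult1, h]

lemma mult2_add {f g : ℝ → ℂ} (hf : BoundedVariationOn f sigma1)
    (hg : BoundedVariationOn g sigma1) :
    mult2 (f + g) = fun n => mult2 f n + mult2 g n := by
  funext n
  by_cases h : n = 0
  · obtain ⟨lf, hlf⟩ := bv_tendsto hf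
    obtain ⟨lg, hlg⟩ := bv_tendsto hg
    simp only [mult2, h, if_pos rfl]
    rw [limf_eq hlf, limf_eq hlg, limf_eq (f := f + g) (l := lf + lg) (by
      simpa using hlf.add hlg)]
    simp
  · simp [mult2, h]

lemma mult2_mul {f g : ℝ → ℂ} (hf : BoundedVariationOn f sigma1)
    (hg : BoundedVariationOn g sigma1) :
    mult2 (f * g) = fun n => mult2 f n * mult2 g n := by
  funext n
  by_cases h : n = 0
  · obtain ⟨lf, hlf⟩ := bv_tendsto hf
    obtain ⟨lg, hlg⟩ := bv_tendsto hg
    simp only [mult2, h, if_pos rfl]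
    rw [limf_eq hlf, limf_eq hlg, limf_eq (f := f * g) (l := lf * lg) (by
      simpa using hlf.mul hlg)]
    simp
  · simp [mult2, h]


/-- On `ℓ²`, the operator `T` with `(Tx)₀ = 0` and `(Tx)ₙ = xₙ/n` (`n ≥ 1`)
admits two distinct `BV(σ₁)` functional calculi `Φ₁, Φ₂` extending its polynomial calculus:
for `f` of bounded variation on `σ₁` the limit `ℓ(f) = lim f(1/n)` exists, `Φ₁(f)` acts
diagonally with multiplier `f(0)` at coordinate `0`, `Φ₂(f)` with multiplier `ℓ(f)`, both with
multipliers `f(1/n)` at coordinates `n ≥ 1`; each `Φᵢ(f)` is bounded with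
`‖Φᵢ(f)‖ ≤ sup_{σ₁}|f| + var_{σ₁} f`, each `Φᵢ` is additive and multiplicative on functions
of bounded variation on `σ₁` and satisfies `Φᵢ(p) = p(T)` for all polynomials `p`, and
`Φ₁ ≠ Φ₂` (they differ at the indicator function of `{0}`). -/
theorem stmt16 :
    ∃ T : lp (fun _ : ℕ => ℂ) 2 →L[ℂ] lp (fun _ : ℕ => ℂ) 2,
      (∀ x : lp (fun _ : ℕ => ℂ) 2, (T x) 0 = 0) ∧
      (∀ x : lp (fun _ : ℕ => ℂ) 2, ∀ n : ℕ, 1 ≤ n → (T x) n = x n / n) ∧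
      (∀ f : ℝ → ℂ, BoundedVariationOn f sigma1 →
        ∃ l : ℂ, Tendsto (fun n : ℕ => f (1 / ((n : ℝ) + 1))) atTop (𝓝 l)) ∧
      ∃ Φ₁ Φ₂ : (ℝ → ℂ) → lp (fun _ : ℕ => ℂ) 2 →L[ℂ] lp (fun _ : ℕ => ℂ) 2,
        (∀ f : ℝ → ℂ, BoundedVariationOn f sigma1 → ∀ x : lp (fun _ : ℕ => ℂ) 2,
          (Φ₁ f x) 0 = f 0 * x 0 ∧
          (∀ l : ℂ, Tendsto (fun n : ℕ => f (1 / ((n : ℝ) + 1))) atTop (𝓝 l) →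
            (Φ₂ f x) 0 = l * x 0) ∧
          (∀ n : ℕ, 1 ≤ n →
            (Φ₁ f x) n = f (1 / (n : ℝ)) * x n ∧ (Φ₂ f x) n = f (1 / (n : ℝ)) * x n)) ∧
        (∀ f g : ℝ → ℂ, BoundedVariationOn f sigma1 → BoundedVariationOn g sigma1 →
          Φ₁ (f + g) = Φ₁ f + Φ₁ g ∧ Φ₁ (f * g) = (Φ₁ f).comp (Φ₁ g) ∧
          Φ₂ (f + g) = Φ₂ f + Φ₂ g ∧ Φ₂ (f * g) = (Φ₂ f).comp (Φ₂ g)) ∧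
        (∀ f : ℝ → ℂ, BoundedVariationOn f sigma1 →
          ‖Φ₁ f‖ ≤ bvNorm sigma1 f ∧ ‖Φ₂ f‖ ≤ bvNorm sigma1 f) ∧
        (∀ p : Polynomial ℂ,
          Φ₁ (fun t : ℝ => p.eval (t : ℂ)) = Polynomial.aeval T p ∧
          Φ₂ (fun t : ℝ => p.eval (t : ℂ)) = Polynomial.aeval T p) ∧
        Φ₁ (Set.indicator {0} fun _ => (1 : ℂ)) ≠ Φ₂ (Set.indicator {0} fun _ => (1 : ℂ)) := by
  refine ⟨diag tmul, fun x => ?_, fun x n hn => ?_, fun f hf => bv_tendsto hf,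
    fun f => diag (mult1 f), fun f => diag (mult2 f), ?_, ?_, ?_, ?_, ?_⟩
  · rw [T_apply]; simp [tmul]
  · rw [T_apply]
    simp only [tmul, if_neg (Nat.one_le_iff_ne_zero.mp hn)]
    rw [one_div_mul_eq_div]
  -- spec
  · intro f hf x
    have hb1 : ∃ C, ∀ k, ‖mult1 f k‖ ≤ C := ⟨_, mult1_bdd hf⟩
    have hb2 : ∃ C, ∀ k, ‖mult2 f k‖ ≤ C := ⟨_, mult2_bdd hf⟩
    refine ⟨?_, fun l hl => ?_, fun n hn => ⟨?_, ?_⟩⟩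
    · rw [diag_apply hb1]; simp [mult1]
    · rw [diag_apply hb2]
      simp only [mult2, if_pos rfl, if_true]
      rw [limf_eq hl]
    · rw [diag_apply hb1]
      simp [mult1, Nat.one_le_iff_ne_zero.mp hn]
    · rw [diag_apply hb2]
      simp [mult2, Nat.one_le_iff_ne_zero.mp hn]
  -- additivity / multiplicativity
  · intro f g hf hg
    have hb1f : ∃ C, ∀ k, ‖mult1 f k‖ ≤ C := ⟨_, mult1_bdd hf⟩
    have hb1g : ∃ C, ∀ k, ‖mult1 g k‖ ≤ C := ⟨_, mult1_bdd hg⟩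
    have hb2f : ∃ C, ∀ k, ‖mult2 f k‖ ≤ C := ⟨_, mult2_bdd hf⟩
    have hb2g : ∃ C, ∀ k, ‖mult2 g k‖ ≤ C := ⟨_, mult2_bdd hg⟩
    have hb1add : ∃ C, ∀ k, ‖mult1 (f + g) k‖ ≤ C := by
      obtain ⟨Cf, hCf⟩ := hb1f; obtain ⟨Cg, hCg⟩ := hb1g
      exact ⟨Cf + Cg, fun k => by
        simp only [mult1_add]
        exact (norm_add_le _ _).trans (add_le_add (hCf k) (hCg k))⟩
    have hb1mul : ∃ C, ∀ k, ‖mult1 (f * g) k‖ ≤ C := by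
      obtain ⟨Cf, hCf⟩ := hb1f; obtain ⟨Cg, hCg⟩ := hb1g
      have hCg0 : 0 ≤ Cg := le_trans (norm_nonneg _) (hCg 0)
      exact ⟨Cf * Cg, fun k => by
        simp only [mult1_mul, norm_mul]
        exact mul_le_mul (hCf k) (hCg k) (norm_nonneg _)
          (le_trans (norm_nonneg _) (hCf 0))⟩
    have hb2add : ∃ C, ∀ k, ‖mult2 (f + g) k‖ ≤ C := by
      obtain ⟨Cf, hCf⟩ := hb2f; obtain ⟨Cg, hCg⟩ := hb2g
      exact ⟨Cf + Cg, fun k => by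
        simp only [mult2_add hf hg]
        exact (norm_add_le _ _).trans (add_le_add (hCf k) (hCg k))⟩
    have hb2mul : ∃ C, ∀ k, ‖mult2 (f * g) k‖ ≤ C := by
      obtain ⟨Cf, hCf⟩ := hb2f; obtain ⟨Cg, hCg⟩ := hb2g
      exact ⟨Cf * Cg, fun k => by
        simp only [mult2_mul hf hg, norm_mul]
        exact mul_le_mul (hCf k) (hCg k) (norm_nonneg _)
          (le_trans (norm_nonneg _) (hCf 0))⟩
    refine ⟨?_, ?_, ?_, ?_⟩
    · refine ContinuousLinearMap.ext fun x => lp.ext (funext fun n => ?_)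
      rw [diag_apply hb1add, ContinuousLinearMap.add_apply, lp.coeFn_add, Pi.add_apply,
        diag_apply hb1f, diag_apply hb1g]
      simp only [mult1_add]
      ring
    · refine ContinuousLinearMap.ext fun x => lp.ext (funext fun n => ?_)
      rw [diag_apply hb1mul, ContinuousLinearMap.comp_apply,
        diag_apply hb1f, diag_apply hb1g]
      simp only [mult1_mul]
      ring
    · refine ContinuousLinearMap.ext fun x => lp.ext (funext fun n => ?_)
      rw [diag_apply hb2add, ContinuousLinearMap.add_apply, lp.coeFn_add, Pi.add_apply,
        diag_apply hb2f, diag_apply hb2g]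
      simp only [mult2_add hf hg]
      ring
    · refine ContinuousLinearMap.ext fun x => lp.ext (funext fun n => ?_)
      rw [diag_apply hb2mul, ContinuousLinearMap.comp_apply,
        diag_apply hb2f, diag_apply hb2g]
      simp only [mult2_mul hf hg]
      ring
  -- norm bounds
  · intro f hf
    have hC : 0 ≤ bvNorm sigma1 f := le_trans (sSup_nonneg_bv hf) sSup_le_bvNorm
    exact ⟨diag_norm_le hC (fun n => (mult1_bdd hf n).trans sSup_le_bvNorm),
      diag_norm_le hC (fun n => (mult2_bdd hf n).trans sSup_le_bvNorm)⟩
  -- polynomials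
  · intro p
    obtain ⟨C, hC⟩ := poly_mult_bdd p
    have hb1 : ∃ C, ∀ k, ‖mult1 (fun t : ℝ => p.eval (t:ℂ)) k‖ ≤ C :=
      ⟨C, fun k => by rw [mult1_poly]; exact hC _ (tmul_bdd k)⟩
    have hb2 : ∃ C, ∀ k, ‖mult2 (fun t : ℝ => p.eval (t:ℂ)) k‖ ≤ C :=
      ⟨C, fun k => by rw [mult2_poly]; exact hC _ (tmul_bdd k)⟩
    constructor
    · refine ContinuousLinearMap.ext fun x => lp.ext (funext fun n => ?_)
      rw [diag_apply hb1, mult1_poly, aeval_T_apply]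
    · refine ContinuousLinearMap.ext fun x => lp.ext (funext fun n => ?_)
      rw [diag_apply hb2, mult2_poly, aeval_T_apply]
  -- Φ₁ ≠ Φ₂
  · intro heq
    set ind : ℝ → ℂ := Set.indicator {0} (fun _ => (1 : ℂ)) with hind
    have hnorm : ∀ t, ‖ind t‖ ≤ 1 := by
      intro t
      by_cases h : t ∈ ({0} : Set ℝ)
      · rw [hind, Set.indicator_of_mem h]; simp
      · rw [hind, Set.indicator_of_notMem h]; simp
    have hval : ∀ n : ℕ, ind (1/((n:ℝ)+1)) = 0 := by
      intro n
      apply Set.indicator_of_notMem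
      simp only [Set.mem_singleton_iff]
      positivity
    have hlim0 : limf ind = 0 := limf_eq (by
      simp only [hval]
      exact tendsto_const_nhds)
    have hbi1 : ∃ C, ∀ k, ‖mult1 ind k‖ ≤ C :=
      ⟨1, fun k => by unfold mult1; split <;> exact hnorm _⟩
    have hbi2 : ∃ C, ∀ k, ‖mult2 ind k‖ ≤ C :=
      ⟨1, fun k => by
        unfold mult2
        split
        · rw [hlim0]; simp
        · exact hnorm _⟩
    have h0 : (diag (mult1 ind) (lp.single 2 0 1)) 0
        = (diag (mult2 ind) (lp.single 2 0 1)) 0 := by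
      have := congrArg (fun (A : lp (fun _ : ℕ => ℂ) 2 →L[ℂ] lp (fun _ : ℕ => ℂ) 2) =>
        (A (lp.single 2 0 1)) 0) heq
      exact this
    rw [diag_apply hbi1, diag_apply hbi2] at h0
    have hx0 : (lp.single 2 0 (1:ℂ) : lp (fun _ : ℕ => ℂ) 2) 0 = 1 :=
      lp.single_apply_self 2 0 1
    simp only [mult1, mult2, if_pos rfl, hlim0, hx0, mul_one] at h0
    simp only [if_true] at h0
    rw [hind, Set.indicator_of_mem (Set.mem_singleton (0:ℝ))] at h0
    exact one_ne_zero h0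
end
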